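/- arXiv:2205.04805 — 3 statements merged into one kernel-verified Lean document; each statement's English description precedes it below -/
import Mathlib

section
/- Let σ be a finite signature and let A and B be valued σ-structures. Then there exists a fractional homomorphism from A to B if and only if Opt(I,B) ≤ Opt(I,A) for every non-negative finite-valued σ-structure I. -/
open scoped BigOperators Classical

namespace PVCSP

/-! ## Valued structures -/

/-- The value `Val(I,A,h)` of an assignment `h : I → A`, where the input structure is
given by weights `vI` and the template structure by costs `vA` (in `ℚ ∪ {∞}`). -/
def Val {σ : Type} [Fintype σ] (ar : σ → ℕ) {I A : Type} [Fintype I]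
    (vI : ∀ R : σ, (Fin (ar R) → I) → ℚ)
    (vA : ∀ R : σ, (Fin (ar R) → A) → WithTop ℚ) (h : I → A) : WithTop ℚ :=
  ∑ R : σ, ∑ v : Fin (ar R) → I, (vI R v : WithTop ℚ) * vA R (fun i => h (v i))

/-- `Opt(I,A)`: the minimum value over all assignments. -/
def Opt {σ : Type} [Fintype σ] (ar : σ → ℕ) {I A : Type} [Fintype I] [DecidableEq I]
    [Fintype A]
    (vI : ∀ R : σ, (Fin (ar R) → I) → ℚ)
    (vA : ∀ R : σ, (Fin (ar R) → A) → WithTop ℚ) : WithTop ℚ :=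
  (Finset.univ : Finset (I → A)).inf fun h => Val ar vI vA h

/-- Non-negativity of an input (finite-valued) structure. -/
def NNeg {σ : Type} (ar : σ → ℕ) {I : Type}
    (vI : ∀ R : σ, (Fin (ar R) → I) → ℚ) : Prop :=
  ∀ R v, 0 ≤ vI R v

/-- A fractional homomorphism from `A` to `B`. -/
def IsFracHom {σ : Type} [Fintype σ] (ar : σ → ℕ) {A B : Type}
    [Fintype A] [DecidableEq A] [Fintype B]
    (vA : ∀ R : σ, (Fin (ar R) → A) → WithTop ℚ)
    (vB : ∀ R : σ, (Fin (ar R) → B) → WithTop ℚ)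
    (μ : (A → B) → ℚ) : Prop :=
  (∀ f, 0 ≤ μ f) ∧ (∑ f : A → B, μ f = 1) ∧
    ∀ (R : σ) (a : Fin (ar R) → A),
      ∑ f : A → B, (μ f : WithTop ℚ) * vB R (fun i => f (a i)) ≤ vA R a

/-- A symmetric `n`-ary operation. -/
def IsSymmetricOp {A B : Type} {n : ℕ} (f : (Fin n → A) → B) : Prop :=
  ∀ (ρ : Equiv.Perm (Fin n)) (x : Fin n → A), f (fun i => x (ρ i)) = f x

/-- An `n`-ary fractional polymorphism of the pair `(A,B)`. -/
def IsFracPoly {σ : Type} [Fintype σ] (ar : σ → ℕ) {A B : Type}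
    [Fintype A] [DecidableEq A] [Fintype B]
    (vA : ∀ R : σ, (Fin (ar R) → A) → WithTop ℚ)
    (vB : ∀ R : σ, (Fin (ar R) → B) → WithTop ℚ)
    (n : ℕ) (ω : ((Fin n → A) → B) → ℚ) : Prop :=
  (∀ f, 0 ≤ ω f) ∧ (∑ f : (Fin n → A) → B, ω f = 1) ∧
    ∀ (R : σ) (a : Fin n → (Fin (ar R) → A)),
      ∑ f : (Fin n → A) → B, (ω f : WithTop ℚ) * vB R (fun j => f (fun i => a i j))
        ≤ ((((n : ℚ)⁻¹ : ℚ)) : WithTop ℚ) * ∑ i : Fin n, vA R (a i)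

/-- A dual fractional homomorphism from `I` to `J` (both non-negative finite-valued). -/
def IsDualFracHom {σ : Type} [Fintype σ] (ar : σ → ℕ) {I J : Type}
    [Fintype I] [DecidableEq I] [Fintype J] [DecidableEq J]
    (vI : ∀ R : σ, (Fin (ar R) → I) → ℚ)
    (vJ : ∀ R : σ, (Fin (ar R) → J) → ℚ)
    (η : (I → J) → ℚ) : Prop :=
  (∀ f, 0 ≤ η f) ∧ (∑ f : I → J, η f = 1) ∧
    ∀ (R : σ) (u : Fin (ar R) → J),
      ∑ f : I → J, η f *
          ∑ v ∈ Finset.univ.filter (fun v : Fin (ar R) → I => (fun i => f (v i)) = u), vI R v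
        ≤ vJ R u

/-! ## Linear programming relaxations -/

/-- Canonical embedding of `ℚ ∪ {∞}` into the extended reals. -/
noncomputable def toE (x : WithTop ℚ) : EReal :=
  x.recTopCoe ⊤ (fun q => ((q : ℝ) : EReal))

/-- The objective value of an LP solution `pc`. -/
def objVal {σ : Type} [Fintype σ] (ar : σ → ℕ) {I A : Type} [Fintype I] [Fintype A]
    (vI : ∀ R : σ, (Fin (ar R) → I) → ℚ)
    (vA : ∀ R : σ, (Fin (ar R) → A) → WithTop ℚ)
    (pc : ∀ R : σ, (Fin (ar R) → I) → (Fin (ar R) → A) → ℚ) : WithTop ℚ :=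
  ∑ R : σ, ∑ v : Fin (ar R) → I, ∑ a : Fin (ar R) → A,
    (pc R v a : WithTop ℚ) * ((vI R v : WithTop ℚ) * vA R a)

/-- Feasibility for the basic linear programming relaxation `BLP(I,A)`. -/
def BLPFeas {σ : Type} [Fintype σ] (ar : σ → ℕ) {I A : Type} [Fintype I] [Fintype A]
    [DecidableEq A]
    (vI : ∀ R : σ, (Fin (ar R) → I) → ℚ)
    (vA : ∀ R : σ, (Fin (ar R) → A) → WithTop ℚ)
    (pv : I → A → ℚ)
    (pc : ∀ R : σ, (Fin (ar R) → I) → (Fin (ar R) → A) → ℚ) : Prop :=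
  (∀ R v a, 0 < vI R v → 0 ≤ pc R v a) ∧
  (∀ u : I, ∑ a : A, pv u a = 1) ∧
  (∀ R v, 0 < vI R v → ∀ (i : Fin (ar R)) (a : A),
      pv (v i) a = ∑ t ∈ Finset.univ.filter (fun t : Fin (ar R) → A => t i = a), pc R v t) ∧
  (∀ R v, 0 < vI R v → ∀ t : Fin (ar R) → A, vA R t = ⊤ → pc R v t = 0)

/-- Feasibility for the Sherali–Adams relaxation `SA¹(I,A)`. -/
def SA1Feas {σ : Type} [Fintype σ] (ar : σ → ℕ) {I A : Type} [Fintype I] [Fintype A]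
    [DecidableEq A]
    (vI : ∀ R : σ, (Fin (ar R) → I) → ℚ)
    (vA : ∀ R : σ, (Fin (ar R) → A) → WithTop ℚ)
    (pv : I → A → ℚ)
    (pc : ∀ R : σ, (Fin (ar R) → I) → (Fin (ar R) → A) → ℚ) : Prop :=
  BLPFeas ar vI vA pv pc ∧
  (∀ R v, 0 < vI R v → ∀ t : Fin (ar R) → A,
      (∃ i j, v i = v j ∧ t i ≠ t j) → pc R v t = 0)

/-- The optimal value `Opt^BLP(I,A)` (equal to `⊤` if the program is infeasible). -/
noncomputable def OptBLP {σ : Type} [Fintype σ] (ar : σ → ℕ) {I A : Type}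
    [Fintype I] [Fintype A] [DecidableEq A]
    (vI : ∀ R : σ, (Fin (ar R) → I) → ℚ)
    (vA : ∀ R : σ, (Fin (ar R) → A) → WithTop ℚ) : EReal :=
  sInf { x : EReal | ∃ pv pc, BLPFeas ar vI vA pv pc ∧ x = toE (objVal ar vI vA pc) }

/-- The optimal value `Opt^{SA¹}(I,A)` (equal to `⊤` if the program is infeasible). -/
noncomputable def OptSA1 {σ : Type} [Fintype σ] (ar : σ → ℕ) {I A : Type}
    [Fintype I] [Fintype A] [DecidableEq A]
    (vI : ∀ R : σ, (Fin (ar R) → I) → ℚ)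
    (vA : ∀ R : σ, (Fin (ar R) → A) → WithTop ℚ) : EReal :=
  sInf { x : EReal | ∃ pv pc, SA1Feas ar vI vA pv pc ∧ x = toE (objVal ar vI vA pc) }

/-- The structure `LP^m(A)` on the universe of `m`-element multisets over `A`. -/
def lpPow {σ : Type} [Fintype σ] (ar : σ → ℕ) {A : Type} [Fintype A] [DecidableEq A]
    (m : ℕ) (vA : ∀ R : σ, (Fin (ar R) → A) → WithTop ℚ) :
    ∀ R : σ, (Fin (ar R) → Sym A m) → WithTop ℚ :=
  fun R s =>
    ((((m : ℚ)⁻¹ : ℚ)) : WithTop ℚ) *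
      ((Finset.univ.filter (fun t : Fin (ar R) → (Fin m → A) =>
          ∀ j, Multiset.map (t j) Finset.univ.val = Sym.toMultiset (s j))).inf
        (fun t => ∑ i : Fin m, vA R (fun j => t j i)))

/-! ## The graph of an input structure and iterated degrees -/

/-- Potential constraint vertices of the graph `G(I)`. -/
abbrev CVert (σ : Type) (ar : σ → ℕ) (I : Type) := Σ R : σ, (Fin (ar R) → I)

/-- The label of the edge between variable `u` and constraint `c`: the set of
coordinates of `c` at which `u` occurs. -/
def edgeLab {σ : Type} {ar : σ → ℕ} {I : Type} [DecidableEq I]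
    (u : I) (c : CVert σ ar I) : Finset ℕ :=
  (Finset.univ.filter (fun i : Fin (ar c.1) => c.2 i = u)).image Fin.val

/-- The type of `k`-th iterated degrees over signature `σ`. -/
def Deg (σ : Type) : ℕ → Type
  | 0 => Option (σ × ℚ)
  | k+1 => Multiset (Finset ℕ × Deg σ k)

/-- The `k`-th iterated degree of a vertex of `G(I)` (a variable or a constraint). -/
def degV {σ : Type} [Fintype σ] (ar : σ → ℕ) {I : Type} [Fintype I] [DecidableEq I]
    (vI : ∀ R : σ, (Fin (ar R) → I) → ℚ) :
    (k : ℕ) → (I ⊕ CVert σ ar I) → Deg σ k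
  | 0, Sum.inl _ => (none : Option (σ × ℚ))
  | 0, Sum.inr c => some (c.1, vI c.1 c.2)
  | k+1, Sum.inl u =>
      ((Finset.univ.filter
          (fun c : CVert σ ar I => 0 < vI c.1 c.2 ∧ ∃ i, c.2 i = u)).val).map
        (fun c => (edgeLab u c, degV ar vI k (Sum.inr c)))
  | k+1, Sum.inr c =>
      ((Finset.univ.filter (fun u : I => ∃ i, c.2 i = u)).val).map
        (fun u => (edgeLab u c, degV ar vI k (Sum.inl u)))

/-- The full iterated degree type. -/
def IterDeg (σ : Type) : Type := ∀ k : ℕ, Deg σ k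

/-- The iterated degree `δ(x)` of a vertex. -/
def itdeg {σ : Type} [Fintype σ] (ar : σ → ℕ) {I : Type} [Fintype I] [DecidableEq I]
    (vI : ∀ R : σ, (Fin (ar R) → I) → ℚ) (x : I ⊕ CVert σ ar I) : IterDeg σ :=
  fun k => degV ar vI k x

/-- The iterated degree sequence `δ(I)` (a multiset over all vertices of `G(I)`). -/
def degSeq {σ : Type} [Fintype σ] (ar : σ → ℕ) {I : Type} [Fintype I] [DecidableEq I]
    (vI : ∀ R : σ, (Fin (ar R) → I) → ℚ) : Multiset (IterDeg σ) :=
  (Finset.univ.val.map (fun u : I => itdeg ar vI (Sum.inl u))) +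
  ((Finset.univ.filter (fun c : CVert σ ar I => 0 < vI c.1 c.2)).val.map
      (fun c => itdeg ar vI (Sum.inr c)))

/-- Adjacency in the graph `G(I)`. -/
def Adj {σ : Type} (ar : σ → ℕ) {I : Type}
    (vI : ∀ R : σ, (Fin (ar R) → I) → ℚ) :
    (I ⊕ CVert σ ar I) → (I ⊕ CVert σ ar I) → Prop
  | Sum.inl u, Sum.inr c => 0 < vI c.1 c.2 ∧ ∃ i, c.2 i = u
  | Sum.inr c, Sum.inl u => 0 < vI c.1 c.2 ∧ ∃ i, c.2 i = u
  | _, _ => False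

/-- Actual vertices of `G(I)`: all variables and the positive-weight constraints. -/
def IsVert {σ : Type} (ar : σ → ℕ) {I : Type}
    (vI : ∀ R : σ, (Fin (ar R) → I) → ℚ) : (I ⊕ CVert σ ar I) → Prop
  | Sum.inl _ => True
  | Sum.inr c => 0 < vI c.1 c.2

/-- Connectedness of the input structure `I` (i.e. of its graph `G(I)`). -/
def Conn {σ : Type} (ar : σ → ℕ) {I : Type}
    (vI : ∀ R : σ, (Fin (ar R) → I) → ℚ) : Prop :=
  Nonempty I ∧ ∀ x y, IsVert ar vI x → IsVert ar vI y →
    Relation.ReflTransGen (Adj ar vI) x y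

/-- Weak congruence: `|J| ⬝ δ(I) = |I| ⬝ δ(J)`. -/
def WeakCongr {σ : Type} [Fintype σ] (ar : σ → ℕ) {I J : Type}
    [Fintype I] [DecidableEq I] [Fintype J] [DecidableEq J]
    (vI : ∀ R : σ, (Fin (ar R) → I) → ℚ)
    (vJ : ∀ R : σ, (Fin (ar R) → J) → ℚ) : Prop :=
  (Fintype.card J) • degSeq ar vI = (Fintype.card I) • degSeq ar vJ

/-- Membership of a variable in the connected component of the variable `x₀`. -/
def InComp {σ : Type} (ar : σ → ℕ) {I : Type}
    (vI : ∀ R : σ, (Fin (ar R) → I) → ℚ) (x₀ u : I) : Prop :=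
  Relation.ReflTransGen (Adj ar vI) (Sum.inl x₀) (Sum.inl u)


/-! ### Auxiliary lemmas for `stmt_0` -/

lemma coe_sum_q {γ : Type*} (s : Finset γ) (g : γ → ℚ) :
    ((∑ x ∈ s, g x : ℚ) : WithTop ℚ) = ∑ x ∈ s, (g x : WithTop ℚ) := by
  push_cast; ring_nf

lemma sum_coe_mul {γ : Type*} (s : Finset γ) (c : γ → ℚ) (x : γ → WithTop ℚ)
    (hx : ∀ g ∈ s, c g ≠ 0 → x g ≠ ⊤) :
    ∑ g ∈ s, (c g : WithTop ℚ) * x g = ((∑ g ∈ s, c g * (x g).untopD 0 : ℚ) : WithTop ℚ) := by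
  rw [coe_sum_q]
  refine Finset.sum_congr rfl fun g hg => ?_
  by_cases h0 : c g = 0
  · simp [h0]
  · obtain ⟨q, hq⟩ := WithTop.ne_top_iff_exists.mp (hx g hg h0)
    rw [← hq]
    norm_cast

lemma sum_top {γ : Type*} (s : Finset γ) (c : γ → ℚ) (x : γ → WithTop ℚ)
    {g : γ} (hg : g ∈ s) (h0 : c g ≠ 0) (ht : x g = ⊤) :
    ∑ g ∈ s, (c g : WithTop ℚ) * x g = ⊤ :=
  WithTop.sum_eq_top.mpr ⟨g, hg, by
    rw [ht, WithTop.mul_top (by exact_mod_cast h0)]⟩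

lemma exists_le_avg {F : Type*} [Fintype F] (μ : F → ℚ) (g : F → ℚ) (B : ℚ)
    (h0 : ∀ f, 0 ≤ μ f) (h1 : ∑ f, μ f = 1) (hB : ∑ f, μ f * g f ≤ B) :
    ∃ f, 0 < μ f ∧ g f ≤ B := by
  by_contra hc
  push_neg at hc
  have hne : ∃ f, 0 < μ f := by
    by_contra hz
    push_neg at hz
    have h2 : ∑ f, μ f = 0 := Finset.sum_eq_zero fun f _ => le_antisymm (hz f) (h0 f)
    rw [h1] at h2; norm_num at h2
  obtain ⟨f₀, hf₀⟩ := hne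
  have hlt : ∑ f, μ f * B < ∑ f, μ f * g f := by
    refine Finset.sum_lt_sum (fun f _ => ?_) ⟨f₀, Finset.mem_univ f₀, ?_⟩
    · rcases eq_or_lt_of_le (h0 f) with h | h
      · simp [← h]
      · exact mul_le_mul_of_nonneg_left (hc f h).le (h0 f)
    · exact mul_lt_mul_of_pos_left (hc f₀ hf₀) hf₀
  rw [← Finset.sum_mul, h1, one_mul] at hlt
  linarith

/-- Ville/Farkas-type alternative over ℚ, `Fin n` version. -/
theorem farkasQ : ∀ (n : ℕ) (F : Type) [Fintype F] (w : F → Fin n → ℚ),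
    (∃ μ : F → ℚ, (∀ f, 0 ≤ μ f) ∧ ∑ f, μ f = 1 ∧ ∀ i, ∑ f, μ f * w f i ≤ 0) ∨
    (∃ y : Fin n → ℚ, (∀ i, 0 ≤ y i) ∧ ∀ f, 0 < ∑ i, y i * w f i) := by
  intro n
  induction n with
  | zero =>
    intro F _ w
    by_cases hF : Nonempty F
    · left
      refine ⟨fun _ => (Fintype.card F : ℚ)⁻¹, fun f => by positivity, ?_, fun i => i.elim0⟩
      rw [Finset.sum_const, Finset.card_univ, nsmul_eq_mul, mul_inv_cancel₀]
      exact_mod_cast Fintype.card_ne_zero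
    · right
      exact ⟨fun i => 0, fun i => le_refl 0, fun f => absurd ⟨f⟩ hF⟩
  | succ n ih =>
    intro F _ w
    set L : Fin (n+1) := Fin.last n with hL
    let P : F ⊕ F × F → Prop := fun x =>
      match x with
      | Sum.inl f => w f L ≤ 0
      | Sum.inr (f, g) => 0 < w f L ∧ w g L < 0
    let lam : F → F → ℚ := fun f g => (-(w g L)) / (w f L - w g L)
    let F' := {x : F ⊕ F × F // P x}
    have hlam_mem : ∀ f g, 0 < w f L → w g L < 0 →
        0 ≤ lam f g ∧ lam f g ≤ 1 ∧ lam f g * w f L + (1 - lam f g) * w g L = 0 := by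
      intro f g hf hg
      have hd : 0 < w f L - w g L := by linarith
      refine ⟨div_nonneg (by linarith) hd.le, by rw [div_le_one hd]; linarith, ?_⟩
      simp only [lam]; field_simp; ring
    let w' : F' → Fin n → ℚ := fun x i =>
      match x with
      | ⟨Sum.inl f, _⟩ => w f i.castSucc
      | ⟨Sum.inr (f, g), _⟩ => lam f g * w f i.castSucc + (1 - lam f g) * w g i.castSucc
    rcases ih F' w' with ⟨μ', h0, h1, hle⟩ | ⟨y', hy0, hy⟩
    · -- lift the convex combination
      left
      let coef : F' → F → ℚ := fun x f =>
        match x with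
        | ⟨Sum.inl g, _⟩ => if g = f then 1 else 0
        | ⟨Sum.inr (g, h), _⟩ =>
            (if g = f then lam g h else 0) + (if h = f then 1 - lam g h else 0)
      have hcoef0 : ∀ x f, 0 ≤ coef x f := by
        rintro ⟨x, hx⟩ f
        match x, hx with
        | Sum.inl g, hx => dsimp [coef]; split <;> norm_num
        | Sum.inr (g, h), hx =>
          obtain ⟨h01, h02, _⟩ := hlam_mem g h hx.1 hx.2
          dsimp [coef]
          have a1 : (0:ℚ) ≤ if g = f then lam g h else 0 := by split <;> simp [h01]
          have a2 : (0:ℚ) ≤ if h = f then 1 - lam g h else 0 := by split <;> [linarith; simp]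
          linarith
      have hcoefsum : ∀ x : F', ∑ f, coef x f = 1 := by
        rintro ⟨x, hx⟩
        match x, hx with
        | Sum.inl g, hx => simp [coef]
        | Sum.inr (g, h), hx => rw [Finset.sum_add_distrib]; simp [coef]
      have hcoefw : ∀ (x : F') (j : Fin n),
          ∑ f, coef x f * w f j.castSucc = w' x j := by
        rintro ⟨x, hx⟩ j
        match x, hx with
        | Sum.inl g, hx =>
          simp only [coef, w', ite_mul, one_mul, zero_mul, Finset.sum_ite_eq,
            Finset.mem_univ, if_true]
        | Sum.inr (g, h), hx =>
          simp only [coef, w', add_mul, ite_mul, zero_mul, Finset.sum_add_distrib,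
            Finset.sum_ite_eq, Finset.mem_univ, if_true]
      have hcoefL : ∀ x : F', ∑ f, coef x f * w f L ≤ 0 := by
        rintro ⟨x, hx⟩
        match x, hx with
        | Sum.inl g, hx =>
          simp only [coef, ite_mul, one_mul, zero_mul, Finset.sum_ite_eq,
            Finset.mem_univ, if_true]
          exact hx
        | Sum.inr (g, h), hx =>
          simp only [coef, add_mul, ite_mul, zero_mul, Finset.sum_add_distrib,
            Finset.sum_ite_eq, Finset.mem_univ, if_true]
          exact le_of_eq (hlam_mem g h hx.1 hx.2).2.2
      refine ⟨fun f => ∑ x : F', μ' x * coef x f, fun f =>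
        Finset.sum_nonneg fun x _ => mul_nonneg (h0 x) (hcoef0 x f), ?_, ?_⟩
      · rw [Finset.sum_comm]
        calc ∑ x : F', ∑ f : F, μ' x * coef x f
            = ∑ x : F', μ' x * ∑ f : F, coef x f := by
              simp [Finset.mul_sum]
          _ = 1 := by simp only [hcoefsum, mul_one]; exact h1
      · intro i
        have key : ∀ i : Fin (n+1), ∑ f : F, (∑ x : F', μ' x * coef x f) * w f i
            = ∑ x : F', μ' x * ∑ f : F, coef x f * w f i := by
          intro i
          simp_rw [Finset.sum_mul, Finset.mul_sum, mul_assoc]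
          exact Finset.sum_comm
        rw [key]
        refine Fin.lastCases ?_ ?_ i
        · exact Finset.sum_nonpos fun x _ => mul_nonpos_of_nonneg_of_nonpos (h0 x) (hcoefL x)
        · intro j
          calc ∑ x : F', μ' x * ∑ f : F, coef x f * w f j.castSucc
              = ∑ x : F', μ' x * w' x j := by
                refine Finset.sum_congr rfl fun x _ => ?_
                rw [hcoefw x j]
            _ ≤ 0 := hle _
    · -- construct the extra coefficient t
      right
      let α : F → ℚ := fun f => ∑ i, y' i * w f i.castSucc
      have hαneg : ∀ f, w f L ≤ 0 → 0 < α f := fun f hf => hy ⟨Sum.inl f, hf⟩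
      have hpair : ∀ f g, 0 < w f L → w g L < 0 →
          0 < lam f g * α f + (1 - lam f g) * α g := by
        intro f g hf hg
        have h2 := hy ⟨Sum.inr (f, g), ⟨hf, hg⟩⟩
        have he : lam f g * α f + (1 - lam f g) * α g
            = ∑ i, y' i * w' ⟨Sum.inr (f, g), ⟨hf, hg⟩⟩ i := by
          simp only [w', α, Finset.mul_sum, ← Finset.sum_add_distrib]
          refine Finset.sum_congr rfl fun i _ => by ring
        rw [he]; exact h2
      let Poss := Finset.univ.filter (fun f : F => 0 < w f L)
      let Negs := Finset.univ.filter (fun f : F => w f L < 0)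
      let lb : F → ℚ := fun f => -α f / w f L
      let ub : F → ℚ := fun f => α f / (-(w f L))
      have hub_pos : ∀ g ∈ Negs, 0 < ub g := by
        intro g hg
        rw [Finset.mem_filter] at hg
        exact div_pos (hαneg g hg.2.le) (by linarith [hg.2])
      have hlb_lt_ub : ∀ f ∈ Poss, ∀ g ∈ Negs, lb f < ub g := by
        intro f hf g hg
        rw [Finset.mem_filter] at hf hg
        have hf := hf.2; have hg := hg.2
        have hkey := hpair f g hf hg
        have hd : 0 < w f L - w g L := by linarith
        have h3 : 0 < (-(w g L)) * α f + w f L * α g := by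
          have h4 := mul_pos hkey hd
          calc (0:ℚ) < (lam f g * α f + (1 - lam f g) * α g) * (w f L - w g L) := h4
          _ = (-(w g L)) * α f + w f L * α g := by simp only [lam]; field_simp; ring
        rw [div_lt_div_iff₀ hf (by linarith : (0:ℚ) < -(w g L))]
        nlinarith
      let S := insert (0:ℚ) (Poss.image lb)
      have hS : S.Nonempty := Finset.insert_nonempty _ _
      set Lmax := S.max' hS with hLmaxdef
      have hLmax0 : 0 ≤ Lmax := Finset.le_max' S 0 (Finset.mem_insert_self _ _)
      have hLmaxlb : ∀ f ∈ Poss, lb f ≤ Lmax := fun f hf =>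
        Finset.le_max' S _ (Finset.mem_insert_of_mem (Finset.mem_image_of_mem lb hf))
      obtain ⟨t, ht0, htlb, htub⟩ :
          ∃ t : ℚ, 0 ≤ t ∧ (∀ f ∈ Poss, lb f < t) ∧ ∀ g ∈ Negs, t < ub g := by
        by_cases hNeg : Negs.Nonempty
        · have hNeg' : (Negs.image ub).Nonempty := hNeg.image ub
          set U := (Negs.image ub).min' hNeg' with hUdef
          have hUmem : U ∈ Negs.image ub := Finset.min'_mem _ _
          obtain ⟨g₀, hg₀, hg₀U⟩ := Finset.mem_image.mp hUmem
          have hLmaxU : Lmax < U := by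
            have hmem : Lmax ∈ S := Finset.max'_mem _ _
            rcases Finset.mem_insert.mp hmem with h | h
            · rw [h, ← hg₀U]; exact hub_pos g₀ hg₀
            · obtain ⟨f, hf, hfl⟩ := Finset.mem_image.mp h
              rw [← hfl, ← hg₀U]; exact hlb_lt_ub f hf g₀ hg₀
          refine ⟨(Lmax + U) / 2, by linarith, ?_, ?_⟩
          · intro f hf; have := hLmaxlb f hf; linarith
          · intro g hg
            have := Finset.min'_le (Negs.image ub) (ub g) (Finset.mem_image_of_mem ub hg)
            rw [← hUdef] at this; linarith
        · refine ⟨Lmax + 1, by linarith, fun f hf => by linarith [hLmaxlb f hf],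
            fun g hg => absurd ⟨g, hg⟩ hNeg⟩
      refine ⟨Fin.snoc y' t, ?_, ?_⟩
      · intro i
        refine Fin.lastCases ?_ ?_ i
        · simpa using ht0
        · intro j; simpa using hy0 j
      · intro f
        have hsum : ∑ i, (Fin.snoc y' t : Fin (n+1) → ℚ) i * w f i = α f + t * w f L := by
          rw [Fin.sum_univ_castSucc]
          simp [α, hL]
        rw [hsum]
        rcases lt_trichotomy (w f L) 0 with h | h | h
        · have h5 := htub f (Finset.mem_filter.mpr ⟨Finset.mem_univ f, h⟩)
          rw [lt_div_iff₀ (by linarith : (0:ℚ) < -(w f L))] at h5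
          nlinarith
        · have := hαneg f h.le; rw [h]; linarith
        · have h5 := htlb f (Finset.mem_filter.mpr ⟨Finset.mem_univ f, h⟩)
          rw [div_lt_iff₀ h] at h5
          nlinarith

/-- Ville/Farkas-type alternative over ℚ, general finite index version. -/
theorem farkasQ' (C : Type) [Fintype C] (F : Type) [Fintype F] (w : F → C → ℚ) :
    (∃ μ : F → ℚ, (∀ f, 0 ≤ μ f) ∧ ∑ f, μ f = 1 ∧ ∀ c, ∑ f, μ f * w f c ≤ 0) ∨
    (∃ y : C → ℚ, (∀ c, 0 ≤ y c) ∧ ∀ f, 0 < ∑ c, y c * w f c) := by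
  have e : C ≃ Fin (Fintype.card C) := (Fintype.equivFin C)
  rcases farkasQ _ F (fun f i => w f (e.symm i)) with ⟨μ, a, b, hc⟩ | ⟨y, hy0, hy⟩
  · left
    refine ⟨μ, a, b, fun c => ?_⟩
    have := hc (e c)
    simpa using this
  · right
    refine ⟨fun c => y (e c), fun c => hy0 _, fun f => ?_⟩
    have h2 := hy f
    have h3 : ∑ c : C, y (e c) * w f c = ∑ i, y i * w f (e.symm i) :=
      Fintype.sum_equiv e _ _ (fun c => by simp)
    rw [h3]; exact h2

/-- The rational (untopped) value of an assignment. -/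
def Qval {σ : Type} [Fintype σ] (ar : σ → ℕ) {I A : Type} [Fintype I]
    (vI : ∀ R : σ, (Fin (ar R) → I) → ℚ)
    (vA : ∀ R : σ, (Fin (ar R) → A) → WithTop ℚ) (h : I → A) : ℚ :=
  ∑ R : σ, ∑ v : Fin (ar R) → I, vI R v * (vA R (fun i => h (v i))).untopD 0

lemma val_eq_coe {σ : Type} [Fintype σ] (ar : σ → ℕ) {I A : Type} [Fintype I]
    (vI : ∀ R : σ, (Fin (ar R) → I) → ℚ)
    (vA : ∀ R : σ, (Fin (ar R) → A) → WithTop ℚ) (h : I → A)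
    (hfin : ∀ R v, vI R v ≠ 0 → vA R (fun i => h (v i)) ≠ ⊤) :
    Val ar vI vA h = ((Qval ar vI vA h : ℚ) : WithTop ℚ) := by
  unfold Val Qval
  rw [coe_sum_q]
  refine Finset.sum_congr rfl fun R _ => ?_
  exact sum_coe_mul _ _ _ (fun v _ hv => hfin R v hv)

lemma val_ne_top {σ : Type} [Fintype σ] (ar : σ → ℕ) {I A : Type} [Fintype I]
    (vI : ∀ R : σ, (Fin (ar R) → I) → ℚ)
    (vA : ∀ R : σ, (Fin (ar R) → A) → WithTop ℚ) (h : I → A)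
    (hV : Val ar vI vA h ≠ ⊤) :
    ∀ R v, vI R v ≠ 0 → vA R (fun i => h (v i)) ≠ ⊤ := by
  intro R v h0 ht
  exact hV (WithTop.sum_eq_top.mpr ⟨R, Finset.mem_univ R,
    sum_top Finset.univ _ _ (Finset.mem_univ v) h0 ht⟩)


theorem stmt_0 {σ : Type} [Fintype σ] (ar : σ → ℕ) (har : ∀ R, 0 < ar R)
    {A B : Type} [Fintype A] [DecidableEq A] [Fintype B]
    (vA : ∀ R : σ, (Fin (ar R) → A) → WithTop ℚ)
    (vB : ∀ R : σ, (Fin (ar R) → B) → WithTop ℚ) :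
    (∃ μ : (A → B) → ℚ, IsFracHom ar vA vB μ) ↔
      ∀ (I : Type) [Fintype I] [DecidableEq I]
        (vI : ∀ R : σ, (Fin (ar R) → I) → ℚ), NNeg ar vI →
        Opt ar vI vB ≤ Opt ar vI vA := by
  constructor
  · -- forward direction
    rintro ⟨μ, hμ0, hμ1, hμc⟩ I _ _ vI hNN
    refine Finset.le_inf fun h _ => ?_
    by_cases hV : Val ar vI vA h = ⊤
    · rw [hV]; exact le_top
    · have hAfin := val_ne_top ar vI vA h hV
      have hBfin : ∀ f : A → B, μ f ≠ 0 → ∀ R v, vI R v ≠ 0 →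
          vB R (fun i => f (h (v i))) ≠ ⊤ := by
        intro f hf R v h0 ht
        have hc := hμc R (fun i => h (v i))
        rw [sum_top Finset.univ μ _ (Finset.mem_univ f) hf ht] at hc
        exact hAfin R v h0 (top_le_iff.mp hc)
      have hcq : ∀ R v, vI R v ≠ 0 →
          ∑ f : A → B, μ f * (vB R (fun i => f (h (v i)))).untopD 0
            ≤ (vA R (fun i => h (v i))).untopD 0 := by
        intro R v h0
        have hc := hμc R (fun i => h (v i))
        rw [sum_coe_mul Finset.univ μ _ (fun f _ hf => hBfin f hf R v h0)] at hc
        obtain ⟨q, hq⟩ := WithTop.ne_top_iff_exists.mp (hAfin R v h0)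
        rw [← hq] at hc ⊢
        simp only [WithTop.untopD_coe]
        exact_mod_cast hc
      have havg : ∑ f : A → B, μ f * Qval ar vI vB (fun u => f (h u))
          ≤ Qval ar vI vA h := by
        have hswap : ∑ f : A → B, μ f * Qval ar vI vB (fun u => f (h u))
            = ∑ R : σ, ∑ v : Fin (ar R) → I,
                vI R v * ∑ f : A → B, μ f * (vB R (fun i => f (h (v i)))).untopD 0 := by
          unfold Qval
          simp_rw [Finset.mul_sum]
          rw [Finset.sum_comm]
          refine Finset.sum_congr rfl fun R _ => ?_
          rw [Finset.sum_comm]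
          refine Finset.sum_congr rfl fun v _ => ?_
          refine Finset.sum_congr rfl fun f _ => by ring
        rw [hswap]
        unfold Qval
        refine Finset.sum_le_sum fun R _ => Finset.sum_le_sum fun v _ => ?_
        by_cases h0 : vI R v = 0
        · simp [h0]
        · exact mul_le_mul_of_nonneg_left (hcq R v h0) (hNN R v)
      obtain ⟨f, hf0, hfle⟩ := exists_le_avg μ _ _ hμ0 hμ1 havg
      calc Opt ar vI vB ≤ Val ar vI vB (fun u => f (h u)) :=
            Finset.inf_le (Finset.mem_univ _)
        _ = ((Qval ar vI vB (fun u => f (h u)) : ℚ) : WithTop ℚ) :=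
            val_eq_coe ar vI vB _ (fun R v h0 => hBfin f (ne_of_gt hf0) R v h0)
        _ ≤ ((Qval ar vI vA h : ℚ) : WithTop ℚ) := by exact_mod_cast hfle
        _ = Val ar vI vA h := (val_eq_coe ar vI vA h hAfin).symm
  · -- backward direction
    intro H
    classical
    set Cfin : Finset (Σ R : σ, (Fin (ar R) → A)) :=
      Finset.univ.filter (fun c => vA c.1 c.2 ≠ ⊤) with hCfin
    set b : (Σ R : σ, (Fin (ar R) → A)) → ℚ := fun c => (vA c.1 c.2).untopD 0 with hb
    set uB : (A → B) → (Σ R : σ, (Fin (ar R) → A)) → ℚ :=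
      fun f c => (vB c.1 (fun i => f (c.2 i))).untopD 0 with huB
    -- conversion between double sums and sigma-sums
    have hsig : ∀ (z : (Σ R : σ, (Fin (ar R) → A)) → ℚ)
        (u : ∀ R : σ, (Fin (ar R) → A) → ℚ),
        (∑ R : σ, ∑ v : Fin (ar R) → A,
            (if vA R v ≠ ⊤ then z ⟨R, v⟩ else 0) * u R v)
          = ∑ c ∈ Cfin, z c * u c.1 c.2 := by
      intro z u
      rw [Finset.sum_sigma', Finset.univ_sigma_univ, hCfin, Finset.sum_filter]
      refine Finset.sum_congr rfl fun c _ => ?_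
      by_cases hc : vA c.1 c.2 = ⊤ <;> simp [hc]
    -- Step A: the key consequence of the hypothesis `H`
    have stepA : ∀ z : (Σ R : σ, (Fin (ar R) → A)) → ℚ, (∀ c, 0 ≤ z c) →
        ∃ f : A → B,
          (∀ c ∈ Cfin, z c ≠ 0 → vB c.1 (fun i => f (c.2 i)) ≠ ⊤) ∧
          ∑ c ∈ Cfin, z c * uB f c ≤ ∑ c ∈ Cfin, z c * b c := by
      intro z hz
      set vIz : ∀ R : σ, (Fin (ar R) → A) → ℚ :=
        fun R v => if vA R v ≠ ⊤ then z ⟨R, v⟩ else 0 with hvIz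
      have hNNz : NNeg ar vIz := by
        intro R v
        rw [hvIz]
        dsimp only
        split
        · exact hz _
        · exact le_refl 0
      have hz_ne : ∀ R v, vIz R v ≠ 0 → (vA R v ≠ ⊤ ∧ z ⟨R, v⟩ ≠ 0) := by
        intro R v h0
        rw [hvIz] at h0
        dsimp only at h0
        by_cases hc : vA R v ≠ ⊤
        · rw [if_pos hc] at h0; exact ⟨hc, h0⟩
        · rw [if_neg hc] at h0; exact absurd rfl h0
      have hAfin : ∀ R v, vIz R v ≠ 0 → vA R (fun i => (id : A → A) (v i)) ≠ ⊤ :=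
        fun R v h0 => (hz_ne R v h0).1
      have h1 : Opt ar vIz vA ≤ Val ar vIz vA id := Finset.inf_le (Finset.mem_univ _)
      have h2 : Val ar vIz vA id = ((Qval ar vIz vA id : ℚ) : WithTop ℚ) :=
        val_eq_coe ar vIz vA id hAfin
      have h4 : Opt ar vIz vB ≤ ((Qval ar vIz vA id : ℚ) : WithTop ℚ) :=
        le_trans (H A vIz hNNz) (le_trans h1 (le_of_eq h2))
      have hne : (Finset.univ : Finset (A → B)).Nonempty := by
        by_contra hemp
        rw [Finset.not_nonempty_iff_eq_empty] at hemp
        unfold Opt at h4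
        rw [hemp] at h4
        simp at h4
      obtain ⟨f, _, hfinf⟩ := Finset.exists_mem_eq_inf
        (Finset.univ : Finset (A → B)) hne (fun g => Val ar vIz vB g)
      have hfle : Val ar vIz vB f ≤ ((Qval ar vIz vA id : ℚ) : WithTop ℚ) := by
        rw [← hfinf]; exact h4
      have hVne : Val ar vIz vB f ≠ ⊤ :=
        ne_top_of_le_ne_top (WithTop.coe_ne_top) hfle
      have hBfin := val_ne_top ar vIz vB f hVne
      have hqle : Qval ar vIz vB f ≤ Qval ar vIz vA id := by
        rw [val_eq_coe ar vIz vB f hBfin] at hfle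
        exact_mod_cast hfle
      refine ⟨f, ?_, ?_⟩
      · intro c hc h0
        rw [hCfin, Finset.mem_filter] at hc
        have : vIz c.1 c.2 ≠ 0 := by
          rw [hvIz]; dsimp only; rw [if_pos hc.2]
          simpa using h0
        have := hBfin c.1 c.2 this
        exact this
      · have e1 : Qval ar vIz vB f = ∑ c ∈ Cfin, z c * uB f c := hsig z _
        have e2 : Qval ar vIz vA id = ∑ c ∈ Cfin, z c * b c := hsig z _
        rw [e1, e2] at hqle
        exact hqle
    -- the set of "finite" maps
    set F0 : Finset (A → B) :=
      Finset.univ.filter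
        (fun f : A → B => ∀ c ∈ Cfin, vB c.1 (fun i => f (c.2 i)) ≠ ⊤) with hF0
    have hF0ne : F0.Nonempty := by
      obtain ⟨f₁, hf₁, _⟩ := stepA (fun _ => 1) (fun _ => by norm_num)
      exact ⟨f₁, by
        rw [hF0, Finset.mem_filter]
        exact ⟨Finset.mem_univ _, fun c hc => hf₁ c hc one_ne_zero⟩⟩
    -- apply the Farkas alternative
    rcases farkasQ' (Σ R : σ, (Fin (ar R) → A)) {f : A → B // f ∈ F0}
        (fun x c => if c ∈ Cfin then uB x.1 c - b c else 0) with
      ⟨μ', hμ'0, hμ'1, hμ'c⟩ | ⟨y, hy0, hy⟩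
    · -- feasible: build the fractional homomorphism
      refine ⟨fun f => if h : f ∈ F0 then μ' ⟨f, h⟩ else 0, ?_, ?_, ?_⟩
      · intro f
        show (0:ℚ) ≤ if h : f ∈ F0 then μ' ⟨f, h⟩ else 0
        by_cases h : f ∈ F0
        · rw [dif_pos h]; exact hμ'0 _
        · rw [dif_neg h]
      · calc ∑ f : A → B, (if h : f ∈ F0 then μ' ⟨f, h⟩ else 0)
            = ∑ f ∈ F0, (if h : f ∈ F0 then μ' ⟨f, h⟩ else 0) :=
              (Finset.sum_subset (Finset.subset_univ F0)
                (fun f _ hf => dif_neg hf)).symm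
          _ = ∑ x : {f : A → B // f ∈ F0}, (if h : x.1 ∈ F0 then μ' ⟨x.1, h⟩ else 0) :=
              (Finset.sum_coe_sort F0 _).symm
          _ = ∑ x : {f : A → B // f ∈ F0}, μ' x :=
              Finset.sum_congr rfl fun x _ => by rw [dif_pos x.2]
          _ = 1 := hμ'1
      · intro R a
        by_cases hcA : vA R a = ⊤
        · rw [hcA]; exact le_top
        · have hcmem : (⟨R, a⟩ : Σ R : σ, (Fin (ar R) → A)) ∈ Cfin := by
            rw [hCfin, Finset.mem_filter]; exact ⟨Finset.mem_univ _, hcA⟩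
          have hμmem : ∀ f : A → B,
              (if h : f ∈ F0 then μ' ⟨f, h⟩ else 0) ≠ 0 → f ∈ F0 := by
            intro f hf
            by_contra h
            rw [dif_neg h] at hf
            exact hf rfl
          have hBf : ∀ f : A → B, (if h : f ∈ F0 then μ' ⟨f, h⟩ else 0) ≠ 0 →
              vB R (fun i => f (a i)) ≠ ⊤ := by
            intro f hf
            have hm := hμmem f hf
            rw [hF0, Finset.mem_filter] at hm
            exact hm.2 ⟨R, a⟩ hcmem
          rw [sum_coe_mul Finset.univ _ _ (fun f _ hf => hBf f hf)]
          have hsum : ∑ f : A → B,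
              (if h : f ∈ F0 then μ' ⟨f, h⟩ else 0) * uB f ⟨R, a⟩
              = ∑ x : {f : A → B // f ∈ F0}, μ' x * uB x.1 ⟨R, a⟩ :=
            calc ∑ f : A → B, (if h : f ∈ F0 then μ' ⟨f, h⟩ else 0) * uB f ⟨R, a⟩
                = ∑ f ∈ F0, (if h : f ∈ F0 then μ' ⟨f, h⟩ else 0) * uB f ⟨R, a⟩ :=
                  (Finset.sum_subset (Finset.subset_univ F0)
                    (fun f _ hf => by rw [dif_neg hf, zero_mul])).symm
              _ = ∑ x : {f : A → B // f ∈ F0},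
                    (if h : x.1 ∈ F0 then μ' ⟨x.1, h⟩ else 0) * uB x.1 ⟨R, a⟩ :=
                  (Finset.sum_coe_sort F0 _).symm
              _ = ∑ x : {f : A → B // f ∈ F0}, μ' x * uB x.1 ⟨R, a⟩ :=
                  Finset.sum_congr rfl fun x _ => by rw [dif_pos x.2]
          have hqb : ∑ f : A → B,
              (if h : f ∈ F0 then μ' ⟨f, h⟩ else 0) * uB f ⟨R, a⟩ ≤ b ⟨R, a⟩ := by
            rw [hsum]
            have hw := hμ'c ⟨R, a⟩
            simp only [if_pos hcmem] at hw
            have expand : ∑ x : {f : A → B // f ∈ F0}, μ' x * uB x.1 ⟨R, a⟩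
                = (∑ x : {f : A → B // f ∈ F0}, μ' x * (uB x.1 ⟨R, a⟩ - b ⟨R, a⟩))
                  + (∑ x : {f : A → B // f ∈ F0}, μ' x) * b ⟨R, a⟩ := by
              rw [Finset.sum_mul, ← Finset.sum_add_distrib]
              refine Finset.sum_congr rfl fun x _ => by ring
            rw [expand, hμ'1, one_mul]
            linarith
          have hbA : vA R a = ((b ⟨R, a⟩ : ℚ) : WithTop ℚ) := by
            obtain ⟨q, hq⟩ := WithTop.ne_top_iff_exists.mp hcA
            simp only [hb]
            rw [← hq]
            simp
          rw [hbA]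
          exact_mod_cast hqb
    · -- infeasible: derive a contradiction with `stepA`
      exfalso
      set gval : {f : A → B // f ∈ F0} → ℚ :=
        fun x => ∑ c ∈ Cfin, y c * (uB x.1 c - b c) with hgval
      have hgpos : ∀ x, 0 < gval x := by
        intro x
        have h2 := hy x
        calc (0:ℚ) < ∑ c : (Σ R : σ, (Fin (ar R) → A)),
              y c * (if c ∈ Cfin then uB x.1 c - b c else 0) := h2
          _ = gval x := by
              rw [hgval]
              dsimp only
              rw [hCfin, Finset.sum_filter]
              refine Finset.sum_congr rfl fun c _ => ?_
              by_cases hc : vA c.1 c.2 = ⊤ <;> simp [hc]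
      set Dval : {f : A → B // f ∈ F0} → ℚ :=
        fun x => ∑ c ∈ Cfin, (b c - uB x.1 c) with hDval
      have hsub : Nonempty {f : A → B // f ∈ F0} := by
        obtain ⟨f₁, hf₁⟩ := hF0ne
        exact ⟨⟨f₁, hf₁⟩⟩
      have hEne : ((Finset.univ : Finset {f : A → B // f ∈ F0}).image
          (fun x => gval x / (2 * max 1 (Dval x)))).Nonempty :=
        (Finset.univ_nonempty).image _
      set ε : ℚ := (((Finset.univ : Finset {f : A → B // f ∈ F0})).image
          (fun x => gval x / (2 * max 1 (Dval x)))).min' hEne with hε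
      have hmaxpos : ∀ x : {f : A → B // f ∈ F0}, (0:ℚ) < 2 * max 1 (Dval x) := by
        intro x
        have := le_max_left (1:ℚ) (Dval x)
        linarith
      have hε0 : 0 < ε := by
        obtain ⟨x, _, hx⟩ := Finset.mem_image.mp (Finset.min'_mem _ hEne)
        rw [hε, ← hx]
        exact div_pos (hgpos x) (hmaxpos x)
      have hεlt : ∀ x, ε * Dval x < gval x := by
        intro x
        have hεx : ε ≤ gval x / (2 * max 1 (Dval x)) :=
          Finset.min'_le _ _ (Finset.mem_image_of_mem _ (Finset.mem_univ x))
        rcases le_or_gt (Dval x) 0 with hD | hD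
        · exact lt_of_le_of_lt (mul_nonpos_of_nonneg_of_nonpos hε0.le hD) (hgpos x)
        · have h1 : ε * Dval x ≤ (gval x / (2 * max 1 (Dval x))) * Dval x :=
            mul_le_mul_of_nonneg_right hεx hD.le
          have hm1 : (1:ℚ) ≤ max 1 (Dval x) := le_max_left _ _
          have hm2 : Dval x ≤ max 1 (Dval x) := le_max_right _ _
          have h2 : (gval x / (2 * max 1 (Dval x))) * Dval x ≤ gval x / 2 := by
            rw [div_mul_eq_mul_div, div_le_div_iff₀ (hmaxpos x) (by norm_num)]
            nlinarith [hgpos x]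
          nlinarith [hgpos x]
      obtain ⟨f₀, hf₀top, hf₀le⟩ := stepA
        (fun c => if c ∈ Cfin then y c + ε else 0)
        (fun c => by
          by_cases hc : c ∈ Cfin
          · simp only [if_pos hc]; have := hy0 c; linarith
          · simp only [if_neg hc]
            exact le_refl 0)
      have hf₀mem : f₀ ∈ F0 := by
        rw [hF0, Finset.mem_filter]
        refine ⟨Finset.mem_univ _, fun c hc => ?_⟩
        refine hf₀top c hc ?_
        simp only [if_pos hc]
        exact ne_of_gt (by linarith [hy0 c])
      have hle' : ∑ c ∈ Cfin, (y c + ε) * uB f₀ c ≤ ∑ c ∈ Cfin, (y c + ε) * b c := by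
        have e1 : ∀ u : (Σ R : σ, (Fin (ar R) → A)) → ℚ,
            ∑ c ∈ Cfin, (if c ∈ Cfin then y c + ε else 0) * u c
              = ∑ c ∈ Cfin, (y c + ε) * u c := fun u =>
          Finset.sum_congr rfl fun c hc => by rw [if_pos hc]
        calc ∑ c ∈ Cfin, (y c + ε) * uB f₀ c
            = ∑ c ∈ Cfin, (if c ∈ Cfin then y c + ε else 0) * uB f₀ c := (e1 _).symm
          _ ≤ ∑ c ∈ Cfin, (if c ∈ Cfin then y c + ε else 0) * b c := hf₀le
          _ = ∑ c ∈ Cfin, (y c + ε) * b c := e1 _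
      have hkey : gval ⟨f₀, hf₀mem⟩ - ε * Dval ⟨f₀, hf₀mem⟩
          = ∑ c ∈ Cfin, (y c + ε) * uB f₀ c - ∑ c ∈ Cfin, (y c + ε) * b c := by
        rw [hgval, hDval]
        dsimp only
        rw [Finset.mul_sum, ← Finset.sum_sub_distrib, ← Finset.sum_sub_distrib]
        exact Finset.sum_congr rfl fun c _ => by ring
      have h6 := hεlt ⟨f₀, hf₀mem⟩
      have h5 : gval ⟨f₀, hf₀mem⟩ - ε * Dval ⟨f₀, hf₀mem⟩ ≤ 0 := by
        rw [hkey]; linarith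
      linarith

end PVCSP
end

section
/- Let σ be a finite signature and let A and B be valued σ-structures. The pair (A,B) is a PVCSP template — i.e., for every non-negative finite-valued σ-structure I and every rational threshold τ it is not the case that both Opt(I,A) ≤ τ and Opt(I,B) > τ — if and only if there exists a fractional homomorphism from A to B. -/
open scoped BigOperators Classical

namespace PVCSP

lemma sum_dite_subtype {ι : Type} [Fintype ι] (p : ι → Prop) [DecidablePred p]
    [Fintype (Subtype p)] (F : Subtype p → ℚ) :
    ∑ i : ι, (if h : p i then F ⟨i, h⟩ else 0) = ∑ s : Subtype p, F s := by
  have h1 : ∑ i ∈ Finset.univ.filter p, (if h : p i then F ⟨i, h⟩ else 0)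
      = ∑ s : Subtype p, F s := by
    rw [Finset.sum_subtype (p := p) (Finset.univ.filter p) (fun x => by simp)
      (fun i => if h : p i then F ⟨i, h⟩ else 0)]
    exact Finset.sum_congr rfl fun s _ => by rw [dif_pos s.2]
  rw [← h1]
  refine (Finset.sum_subset (Finset.filter_subset p Finset.univ) ?_).symm
  intro x _ hx
  simp only [Finset.mem_filter, Finset.mem_univ, true_and] at hx
  rw [dif_neg hx]

theorem farkas (n : ℕ) : ∀ {ι : Type} [Fintype ι] (Arow : ι → Fin n → ℚ) (b : ι → ℚ),
    (∃ x : Fin n → ℚ, ∀ i, ∑ j, Arow i j * x j ≤ b i) ∨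
    (∃ y : ι → ℚ, (∀ i, 0 ≤ y i) ∧ (∀ j, ∑ i, y i * Arow i j = 0) ∧ ∑ i, y i * b i < 0) := by
  induction n with
  | zero =>
    intro ι _ Arow b
    by_cases hb : ∀ i, 0 ≤ b i
    · exact Or.inl ⟨fun _ => 0, fun i => by simpa using hb i⟩
    · push_neg at hb
      obtain ⟨i₀, hi₀⟩ := hb
      refine Or.inr ⟨fun i => if i = i₀ then 1 else 0, fun i => by positivity,
        fun j => j.elim0, ?_⟩
      have he : ∀ i : ι, (if i = i₀ then (1:ℚ) else 0) * b i = if i = i₀ then b i else 0 := by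
        intro i; split <;> ring
      simp only [he, Finset.sum_ite_eq' Finset.univ i₀ b, Finset.mem_univ, if_true]
      exact hi₀
  | succ n ih =>
    intro ι _ Arow b
    set a : ι → ℚ := fun i => Arow i (Fin.last n) with ha
    set A' : ({i // a i = 0} ⊕ {i // 0 < a i} × {i // a i < 0}) → Fin n → ℚ :=
      fun i' j => match i' with
        | Sum.inl z => Arow z.1 j.castSucc
        | Sum.inr (p, q) => (-a q.1) * Arow p.1 j.castSucc + a p.1 * Arow q.1 j.castSucc
      with hA'
    set b' : ({i // a i = 0} ⊕ {i // 0 < a i} × {i // a i < 0}) → ℚ :=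
      fun i' => match i' with
        | Sum.inl z => b z.1
        | Sum.inr (p, q) => (-a q.1) * b p.1 + a p.1 * b q.1
      with hb'
    rcases ih A' b' with ⟨x', hx'⟩ | ⟨y', hy0, hyA, hyb⟩
    · -- feasible case
      set S : ι → ℚ := fun i => ∑ j : Fin n, Arow i j.castSucc * x' j with hS
      have hZ : ∀ i, a i = 0 → S i ≤ b i := fun i h => hx' (Sum.inl ⟨i, h⟩)
      have hPNsum : ∀ (p q : ι) (hp : 0 < a p) (hq : a q < 0),
          (-a q) * S p + a p * S q ≤ (-a q) * b p + a p * b q := by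
        intro p q hp hq
        have h1 := hx' (Sum.inr (⟨p, hp⟩, ⟨q, hq⟩))
        have h2 : ∑ j : Fin n, A' (Sum.inr (⟨p, hp⟩, ⟨q, hq⟩)) j * x' j
            = (-a q) * S p + a p * S q := by
          show ∑ j : Fin n, ((-a q) * Arow p j.castSucc + a p * Arow q j.castSucc) * x' j
            = (-a q) * S p + a p * S q
          simp only [hS, Finset.mul_sum, ← Finset.sum_add_distrib]
          exact Finset.sum_congr rfl fun j _ => by ring
        rw [h2] at h1
        exact h1
      have hPN : ∀ (p q : ι), 0 < a p → a q < 0 →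
          (b q - S q) / a q ≤ (b p - S p) / a p := by
        intro p q hp hq
        have h1 := hPNsum p q hp hq
        have e1 : (b q - S q) / a q = (S q - b q) / (-a q) := by
          rw [div_neg, ← neg_div, neg_sub]
        rw [e1, div_le_div_iff₀ (by linarith) hp]
        nlinarith [h1]
      -- choose the last coordinate
      set PF : Finset ι := Finset.univ.filter (fun i => 0 < a i) with hPF
      set NF : Finset ι := Finset.univ.filter (fun i => a i < 0) with hNF
      set t : ℚ :=
        if hP : PF.Nonempty then PF.inf' hP (fun p => (b p - S p) / a p)
        else if hN : NF.Nonempty then NF.sup' hN (fun q => (b q - S q) / a q) else 0 with hts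
      have htU : ∀ p ∈ PF, t ≤ (b p - S p) / a p := by
        intro p hp
        rw [hts, dif_pos ⟨p, hp⟩]
        exact Finset.inf'_le _ hp
      have htL : ∀ q ∈ NF, (b q - S q) / a q ≤ t := by
        intro q hq
        by_cases hP : PF.Nonempty
        · rw [hts, dif_pos hP]
          obtain ⟨p₀, hp₀, hp₀e⟩ := Finset.exists_mem_eq_inf' hP (fun p => (b p - S p) / a p)
          rw [hp₀e]
          exact hPN p₀ q (by simpa [hPF] using hp₀) (by simpa [hNF] using hq)
        · rw [hts, dif_neg hP, dif_pos ⟨q, hq⟩]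
          exact Finset.le_sup' (fun q => (b q - S q) / a q) hq
      refine Or.inl ⟨(Fin.snoc x' t : Fin (n+1) → ℚ), fun i => ?_⟩
      have hsum : ∑ j : Fin (n+1), Arow i j * (Fin.snoc x' t : Fin (n+1) → ℚ) j
          = S i + a i * t := by
        rw [Fin.sum_univ_castSucc]
        simp [hS, ha]
      rw [hsum]
      rcases lt_trichotomy (a i) 0 with hlt | heq | hgt
      · have h1 := htL i (by simp [hNF, hlt])
        have h2 : a i * t ≤ a i * ((b i - S i) / a i) :=
          mul_le_mul_of_nonpos_left h1 (le_of_lt hlt)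
        rw [mul_div_cancel₀ _ (ne_of_lt hlt)] at h2
        linarith
      · rw [heq]; simpa using hZ i heq
      · have h1 := htU i (by simp [hPF, hgt])
        rw [le_div_iff₀ hgt] at h1
        linarith [h1]
    · -- dual case
      set yZ : ι → ℚ := fun i => if h : a i = 0 then y' (Sum.inl ⟨i, h⟩) else 0 with hyZ
      set yP : ι → ℚ := fun i => if h : 0 < a i then
          ∑ q : {i // a i < 0}, y' (Sum.inr (⟨i, h⟩, q)) * (-a q.1) else 0 with hyP
      set yN : ι → ℚ := fun i => if h : a i < 0 then
          ∑ p : {i // 0 < a i}, y' (Sum.inr (p, ⟨i, h⟩)) * a p.1 else 0 with hyN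
      set y : ι → ℚ := fun i => yZ i + yP i + yN i with hy
      have key : ∀ g : ι → ℚ, ∑ i, y i * g i =
          ∑ z : {i // a i = 0}, y' (Sum.inl z) * g z.1 +
          ∑ p : {i // 0 < a i}, ∑ q : {i // a i < 0},
            y' (Sum.inr (p, q)) * ((-a q.1) * g p.1 + a p.1 * g q.1) := by
        intro g
        have e1 : ∑ i, yZ i * g i = ∑ z : {i // a i = 0}, y' (Sum.inl z) * g z.1 := by
          rw [← sum_dite_subtype (fun i => a i = 0) (fun z => y' (Sum.inl z) * g z.1)]
          refine Finset.sum_congr rfl fun i _ => ?_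
          rw [hyZ]; by_cases h : a i = 0 <;> simp [h]
        have e2 : ∑ i, yP i * g i =
            ∑ p : {i // 0 < a i}, ∑ q : {i // a i < 0},
              y' (Sum.inr (p, q)) * ((-a q.1) * g p.1) := by
          rw [← sum_dite_subtype (fun i => 0 < a i)
            (fun p => ∑ q : {i // a i < 0}, y' (Sum.inr (p, q)) * ((-a q.1) * g p.1))]
          refine Finset.sum_congr rfl fun i _ => ?_
          simp only [hyP]
          by_cases h : 0 < a i
          · rw [dif_pos h, dif_pos h, Finset.sum_mul]
            exact Finset.sum_congr rfl fun q _ => by ring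
          · simp [h]
        have e3 : ∑ i, yN i * g i =
            ∑ q : {i // a i < 0}, ∑ p : {i // 0 < a i},
              y' (Sum.inr (p, q)) * (a p.1 * g q.1) := by
          rw [← sum_dite_subtype (fun i => a i < 0)
            (fun q => ∑ p : {i // 0 < a i}, y' (Sum.inr (p, q)) * (a p.1 * g q.1))]
          refine Finset.sum_congr rfl fun i _ => ?_
          simp only [hyN]
          by_cases h : a i < 0
          · rw [dif_pos h, dif_pos h, Finset.sum_mul]
            exact Finset.sum_congr rfl fun p _ => by ring
          · simp [h]
        have : ∑ i, y i * g i = ∑ i, yZ i * g i + ∑ i, yP i * g i + ∑ i, yN i * g i := by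
          simp only [hy, ← Finset.sum_add_distrib]
          exact Finset.sum_congr rfl fun i _ => by ring
        have e4 : ∑ q : {i // a i < 0}, ∑ p : {i // 0 < a i},
              y' (Sum.inr (p, q)) * (a p.1 * g q.1)
            = ∑ p : {i // 0 < a i}, ∑ q : {i // a i < 0},
              y' (Sum.inr (p, q)) * (a p.1 * g q.1) := Finset.sum_comm
        rw [this, e1, e2, e3, e4, add_assoc, ← Finset.sum_add_distrib]
        congr 1
        refine Finset.sum_congr rfl fun p _ => ?_
        rw [← Finset.sum_add_distrib]
        exact Finset.sum_congr rfl fun q _ => by ring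
      refine Or.inr ⟨y, ?_, ?_, ?_⟩
      · intro i
        have h1 : 0 ≤ yZ i := by
          simp only [hyZ]
          split
          · exact hy0 _
          · exact le_refl 0
        have h2 : 0 ≤ yP i := by
          simp only [hyP]
          split
          · exact Finset.sum_nonneg fun q _ => mul_nonneg (hy0 _) (by linarith [q.2])
          · exact le_refl 0
        have h3 : 0 ≤ yN i := by
          simp only [hyN]
          split
          · exact Finset.sum_nonneg fun p _ => mul_nonneg (hy0 _) (le_of_lt p.2)
          · exact le_refl 0
        exact add_nonneg (add_nonneg h1 h2) h3
      · intro j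
        refine Fin.lastCases ?_ ?_ j
        · rw [key (fun i => Arow i (Fin.last n))]
          have hz : ∀ z : {i // a i = 0}, y' (Sum.inl z) * Arow z.1 (Fin.last n) = 0 := by
            intro z; rw [show Arow z.1 (Fin.last n) = a z.1 from rfl, z.2, mul_zero]
          rw [Finset.sum_congr rfl fun z _ => hz z]
          simp only [Finset.sum_const_zero, zero_add]
          refine Finset.sum_eq_zero fun p _ => Finset.sum_eq_zero fun q _ => ?_
          rw [show Arow p.1 (Fin.last n) = a p.1 from rfl,
            show Arow q.1 (Fin.last n) = a q.1 from rfl]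
          ring
        · intro j₀
          rw [key (fun i => Arow i j₀.castSucc)]
          have := hyA j₀
          rw [Fintype.sum_sum_type, Fintype.sum_prod_type] at this
          exact this
      · rw [key b]
        rw [Fintype.sum_sum_type, Fintype.sum_prod_type] at hyb
        exact hyb

theorem farkas' {κ ι : Type} [Fintype κ] [Fintype ι] (Arow : ι → κ → ℚ) (b : ι → ℚ) :
    (∃ x : κ → ℚ, ∀ i, ∑ j, Arow i j * x j ≤ b i) ∨
    (∃ y : ι → ℚ, (∀ i, 0 ≤ y i) ∧ (∀ j, ∑ i, y i * Arow i j = 0) ∧ ∑ i, y i * b i < 0) := by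
  set e := Fintype.equivFin κ with he
  rcases farkas (Fintype.card κ) (fun i j' => Arow i (e.symm j')) b with ⟨x, hx⟩ | ⟨y, hy⟩
  · refine Or.inl ⟨fun j => x (e j), fun i => ?_⟩
    calc ∑ j : κ, Arow i j * x (e j)
        = ∑ j' : Fin (Fintype.card κ), Arow i (e.symm j') * x j' := by
          rw [← Equiv.sum_comp e (fun j' => Arow i (e.symm j') * x j')]
          exact Finset.sum_congr rfl fun j _ => by rw [e.symm_apply_apply]
      _ ≤ b i := hx i
  · refine Or.inr ⟨y, hy.1, fun j => ?_, hy.2.2⟩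
    have := hy.2.1 (e j)
    simpa using this


theorem fwd {σ : Type} [Fintype σ] (ar : σ → ℕ)
    {A B : Type} [Fintype A] [DecidableEq A] [Fintype B]
    (vA : ∀ R : σ, (Fin (ar R) → A) → WithTop ℚ)
    (vB : ∀ R : σ, (Fin (ar R) → B) → WithTop ℚ)
    (hT : ∀ (I : Type) [Fintype I] [DecidableEq I]
        (vI : ∀ R : σ, (Fin (ar R) → I) → ℚ), NNeg ar vI →
        ∀ τ : ℚ, ¬ (Opt ar vI vA ≤ (τ : WithTop ℚ) ∧ (τ : WithTop ℚ) < Opt ar vI vB)) :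
    ∃ μ : (A → B) → ℚ, IsFracHom ar vA vB μ := by
  set C := (Σ R : σ, (Fin (ar R) → A)) with hC
  set d : C → ℚ := fun c => if vA c.1 c.2 = ⊤ then 0 else (vA c.1 c.2).untopD 0 with hd
  set w : (A → B) → C → ℚ := fun f c =>
    if vA c.1 c.2 = ⊤ then 0 else (vB c.1 (fun i => f (c.2 i))).untopD 0 with hw
  set adm : (A → B) → Prop := fun f =>
    ∀ c : C, vA c.1 c.2 ≠ ⊤ → vB c.1 (fun i => f (c.2 i)) ≠ ⊤ with hadmdef
  rcases farkas' (κ := Subtype adm) (ι := (Subtype adm) ⊕ (Bool ⊕ C))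
      (Sum.elim (fun (f : Subtype adm) (f' : Subtype adm) => if f' = f then (-1:ℚ) else 0)
        (Sum.elim (fun (b : Bool) (_ : Subtype adm) => (cond b 1 (-1) : ℚ))
          (fun (c : C) (f' : Subtype adm) => w f'.1 c)))
      (Sum.elim (fun _ => (0:ℚ)) (Sum.elim (fun b => (cond b 1 (-1) : ℚ)) d))
      with ⟨x, hx⟩ | ⟨y, hy0, hyA, hyb⟩
  · -- primal feasible: build the fractional homomorphism
    have hxnn : ∀ f : Subtype adm, 0 ≤ x f := by
      intro f
      have h1 := hx (Sum.inl f)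
      simp only [Sum.elim_inl] at h1
      have h2 : ∑ f' : Subtype adm, (if f' = f then (-1:ℚ) else 0) * x f' = -x f := by
        rw [Finset.sum_congr rfl (fun f' _ =>
          show (if f' = f then (-1:ℚ) else 0) * x f' = if f' = f then -x f' else 0 by
            split <;> ring)]
        rw [Finset.sum_ite_eq' Finset.univ f (fun f' => -x f')]
        simp
      rw [h2] at h1
      linarith
    have hsum : ∑ f' : Subtype adm, x f' = 1 := by
      have h1 := hx (Sum.inr (Sum.inl true))
      have h2 := hx (Sum.inr (Sum.inl false))
      simp only [Sum.elim_inr, Sum.elim_inl, cond_true, cond_false] at h1 h2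
      have e2 : ∑ f' : Subtype adm, (-1:ℚ) * x f' = -∑ f' : Subtype adm, x f' := by
        rw [← Finset.sum_neg_distrib]
        exact Finset.sum_congr rfl fun f' _ => by ring
      rw [e2] at h2
      simp only [one_mul] at h1
      linarith
    have hcons : ∀ c : C, ∑ f' : Subtype adm, w f'.1 c * x f' ≤ d c := by
      intro c
      have h1 := hx (Sum.inr (Sum.inr c))
      simp only [Sum.elim_inr] at h1
      exact h1
    refine ⟨fun f => if h : adm f then x ⟨f, h⟩ else 0, ?_, ?_, ?_⟩
    · intro f
      dsimp only
      by_cases h : adm f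
      · rw [dif_pos h]; exact hxnn _
      · rw [dif_neg h]
    · dsimp only
      rw [sum_dite_subtype adm (fun f' => x f')]
      exact hsum
    · intro R aa
      dsimp only
      by_cases hTop : vA R aa = ⊤
      · rw [hTop]; exact le_top
      · have hdd : d ⟨R, aa⟩ = (vA R aa).untopD 0 := if_neg hTop
        have hAc : vA R aa = ((d ⟨R, aa⟩ : ℚ) : WithTop ℚ) := by
          rw [hdd]
          lift vA R aa to ℚ using hTop with q hq
          simp
        have he : ∀ f : A → B,
            ((if h : adm f then x ⟨f, h⟩ else 0 : ℚ) : WithTop ℚ) * vB R (fun i => f (aa i))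
            = (((if h : adm f then x ⟨f, h⟩ else 0) * w f ⟨R, aa⟩ : ℚ) : WithTop ℚ) := by
          intro f
          by_cases hf : adm f
          · have hBne : vB R (fun i => f (aa i)) ≠ ⊤ := hf ⟨R, aa⟩ hTop
            have hwd : w f ⟨R, aa⟩ = (vB R (fun i => f (aa i))).untopD 0 := if_neg hTop
            rw [hwd]
            lift vB R (fun i => f (aa i)) to ℚ using hBne with q hq
            rw [← WithTop.coe_mul]
            simp
          · rw [dif_neg hf]
            simp
        rw [Finset.sum_congr rfl (fun f _ => he f), ← WithTop.coe_sum, hAc,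
          WithTop.coe_le_coe]
        calc ∑ f : A → B, (if h : adm f then x ⟨f, h⟩ else 0) * w f ⟨R, aa⟩
            = ∑ f' : Subtype adm, x f' * w f'.1 ⟨R, aa⟩ := by
              rw [← sum_dite_subtype adm (fun f' => x f' * w f'.1 ⟨R, aa⟩)]
              refine Finset.sum_congr rfl fun f _ => ?_
              by_cases hf : adm f
              · rw [dif_pos hf, dif_pos hf]
              · rw [dif_neg hf, dif_neg hf, zero_mul]
          _ ≤ d ⟨R, aa⟩ := by
              rw [Finset.sum_congr rfl (fun f' _ =>
                show x f' * w f'.1 ⟨R, aa⟩ = w f'.1 ⟨R, aa⟩ * x f' from mul_comm _ _)]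
              exact hcons ⟨R, aa⟩
  · -- dual: build a separating instance
    exfalso
    set z : C → ℚ := fun c => y (Sum.inr (Sum.inr c)) with hz
    have hznn : ∀ c, 0 ≤ z c := fun c => hy0 _
    have hrow : ∀ f' : Subtype adm,
        ∑ c : C, z c * w f'.1 c
          = y (Sum.inl f') - (y (Sum.inr (Sum.inl true)) - y (Sum.inr (Sum.inl false))) := by
      intro f'
      have h0 := hyA f'
      simp only [Fintype.sum_sum_type, Fintype.sum_bool, Sum.elim_inl, Sum.elim_inr,
        cond_true, cond_false] at h0
      have e1 : ∑ f : Subtype adm, y (Sum.inl f) * (if f' = f then (-1:ℚ) else 0)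
          = -y (Sum.inl f') := by
        rw [Finset.sum_congr rfl (fun f _ =>
          show y (Sum.inl f) * (if f' = f then (-1:ℚ) else 0)
            = if f' = f then -y (Sum.inl f) else 0 by split <;> ring)]
        rw [Finset.sum_ite_eq Finset.univ f' (fun f => -y (Sum.inl f))]
        simp
      rw [e1] at h0
      linarith
    have hbase : (y (Sum.inr (Sum.inl true)) - y (Sum.inr (Sum.inl false)))
        + ∑ c : C, z c * d c < 0 := by
      have h0 := hyb
      simp only [Fintype.sum_sum_type, Fintype.sum_bool, Sum.elim_inl, Sum.elim_inr,
        cond_true, cond_false, mul_zero, Finset.sum_const_zero] at h0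
      linarith
    have hkey : ∀ f' : Subtype adm, ∑ c : C, z c * d c < ∑ c : C, z c * w f'.1 c := by
      intro f'
      have h1 := hrow f'
      have h2 := hy0 (Sum.inl f')
      linarith
    set δ : (A → B) → ℚ := fun f => ∑ c : C, z c * (w f c - d c) with hδ
    set sl : (A → B) → ℚ := fun f => ∑ c : C, (d c - w f c) with hsl
    set H : Finset (A → B) := Finset.univ.filter adm with hH
    have hδpos : ∀ f ∈ H, 0 < δ f := by
      intro f hf
      rw [hH, Finset.mem_filter] at hf
      have h1 := hkey ⟨f, hf.2⟩
      have e1 : δ f = ∑ c : C, z c * w f c - ∑ c : C, z c * d c := by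
        rw [hδ, ← Finset.sum_sub_distrib]
        exact Finset.sum_congr rfl fun c _ => by ring
      rw [e1]
      exact sub_pos.mpr h1
    set ε : ℚ := if hHne : H.Nonempty then H.inf' hHne (fun f => δ f / (2 * (1 + max (sl f) 0)))
      else 1 with hε
    have hεpos : 0 < ε := by
      rw [hε]
      split
      · next hHne =>
        obtain ⟨f₀, hf₀, he⟩ := Finset.exists_mem_eq_inf' hHne
          (fun f => δ f / (2 * (1 + max (sl f) 0)))
        rw [he]
        have hD : (0:ℚ) < 2 * (1 + max (sl f₀) 0) := by
          have := le_max_right (sl f₀) (0:ℚ); linarith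
        exact div_pos (hδpos f₀ hf₀) hD
      · exact one_pos
    have hεs : ∀ f ∈ H, ε * sl f < δ f := by
      intro f hf
      have hD : (0:ℚ) < 2 * (1 + max (sl f) 0) := by
        have := le_max_right (sl f) (0:ℚ); linarith
      have hb : ε ≤ δ f / (2 * (1 + max (sl f) 0)) := by
        rw [hε, dif_pos ⟨f, hf⟩]
        exact Finset.inf'_le _ hf
      rw [le_div_iff₀ hD] at hb
      have hm : ε * sl f ≤ ε * max (sl f) 0 :=
        mul_le_mul_of_nonneg_left (le_max_left _ _) hεpos.le
      have h0m : 0 ≤ ε * max (sl f) 0 := mul_nonneg hεpos.le (le_max_right _ _)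
      nlinarith [hb, hm, h0m, hεpos]
    set vI : ∀ R : σ, (Fin (ar R) → A) → ℚ :=
      fun R t => if vA R t = ⊤ then 0 else z ⟨R, t⟩ + ε with hvI
    have hNN : NNeg ar vI := by
      intro R t
      have : vI R t = if vA R t = ⊤ then 0 else z ⟨R, t⟩ + ε := rfl
      rw [this]
      split
      · exact le_refl 0
      · have := hznn ⟨R, t⟩; linarith
    set τ : ℚ := ∑ c : C, vI c.1 c.2 * d c with hτ
    apply hT A vI hNN τ
    constructor
    · -- Opt(A,A) ≤ τ via the identity map
      have hid : Val ar vI vA id = ((τ : ℚ) : WithTop ℚ) := by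
        have hτ2 : τ = ∑ R : σ, ∑ t : Fin (ar R) → A, vI R t * d ⟨R, t⟩ := by
          rw [hτ, ← Finset.univ_sigma_univ, Finset.sum_sigma]
        rw [Val, hτ2, WithTop.coe_sum]
        refine Finset.sum_congr rfl fun R _ => ?_
        rw [WithTop.coe_sum]
        refine Finset.sum_congr rfl fun t _ => ?_
        have hdd : d ⟨R, t⟩ = if vA R t = ⊤ then 0 else (vA R t).untopD 0 := rfl
        have hvd : vI R t = if vA R t = ⊤ then 0 else z ⟨R, t⟩ + ε := rfl
        by_cases hTop : vA R t = ⊤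
        · rw [show (fun i => id (t i)) = t from rfl, hvd, if_pos hTop, hTop]
          simp
        · rw [show (fun i => id (t i)) = t from rfl, hdd, if_neg hTop]
          lift vA R t to ℚ using hTop with q hq
          rw [← WithTop.coe_mul]
          simp
      rw [Opt, ← hid]
      exact Finset.inf_le (Finset.mem_univ id)
    · -- τ < Opt(A,B)
      rw [Opt, Finset.lt_inf_iff (WithTop.coe_lt_top τ)]
      intro f _
      by_cases hadm : adm f
      · have hVal : Val ar vI vB f = ((∑ c : C, vI c.1 c.2 * w f c : ℚ) : WithTop ℚ) := by
          have he : (∑ c : C, vI c.1 c.2 * w f c)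
              = ∑ R : σ, ∑ t : Fin (ar R) → A, vI R t * w f ⟨R, t⟩ := by
            rw [← Finset.univ_sigma_univ, Finset.sum_sigma]
          rw [Val, he, WithTop.coe_sum]
          refine Finset.sum_congr rfl fun R _ => ?_
          rw [WithTop.coe_sum]
          refine Finset.sum_congr rfl fun t _ => ?_
          have hwd : w f ⟨R, t⟩
              = if vA R t = ⊤ then 0 else (vB R (fun i => f (t i))).untopD 0 := rfl
          have hvd : vI R t = if vA R t = ⊤ then 0 else z ⟨R, t⟩ + ε := rfl
          by_cases hTop : vA R t = ⊤
          · rw [hvd, if_pos hTop]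
            simp
          · have hBne : vB R (fun i => f (t i)) ≠ ⊤ := hadm ⟨R, t⟩ hTop
            rw [hwd, if_neg hTop]
            lift vB R (fun i => f (t i)) to ℚ using hBne with q hq
            rw [← WithTop.coe_mul]
            simp
        rw [hVal, WithTop.coe_lt_coe]
        have hterm : ∀ c : C, vI c.1 c.2 * w f c - vI c.1 c.2 * d c
            = z c * (w f c - d c) - ε * (d c - w f c) := by
          intro c
          have hwd : w f c = if vA c.1 c.2 = ⊤ then 0
              else (vB c.1 (fun i => f (c.2 i))).untopD 0 := rfl
          have hdd : d c = if vA c.1 c.2 = ⊤ then 0 else (vA c.1 c.2).untopD 0 := rfl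
          have hvd : vI c.1 c.2 = if vA c.1 c.2 = ⊤ then 0 else z ⟨c.1, c.2⟩ + ε := rfl
          by_cases hTop : vA c.1 c.2 = ⊤
          · rw [hwd, hdd, hvd, if_pos hTop, if_pos hTop, if_pos hTop]
            ring
          · rw [hvd, if_neg hTop, show (⟨c.1, c.2⟩ : C) = c from rfl]
            ring
        have hdiff : ∑ c : C, vI c.1 c.2 * w f c - τ = δ f - ε * sl f := by
          rw [hτ, ← Finset.sum_sub_distrib,
            Finset.sum_congr rfl (fun c _ => hterm c), Finset.sum_sub_distrib]
          congr 1
          rw [hsl, Finset.mul_sum]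
        have hfH : f ∈ H := by rw [hH, Finset.mem_filter]; exact ⟨Finset.mem_univ f, hadm⟩
        have := hεs f hfH
        linarith
      · -- f is not admissible: value is ⊤
        have hex : ∃ c : C, vA c.1 c.2 ≠ ⊤ ∧ vB c.1 (fun i => f (c.2 i)) = ⊤ := by
          by_contra hcon
          push_neg at hcon
          exact hadm fun c hc => hcon c hc
        obtain ⟨c, hcA, hcB⟩ := hex
        have hvpos : 0 < vI c.1 c.2 := by
          have hvd : vI c.1 c.2 = if vA c.1 c.2 = ⊤ then 0 else z ⟨c.1, c.2⟩ + ε := rfl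
          rw [hvd, if_neg hcA, show (⟨c.1, c.2⟩ : C) = c from rfl]
          have := hznn c
          linarith
        have hValTop : Val ar vI vB f = ⊤ := by
          rw [Val, WithTop.sum_eq_top]
          refine ⟨c.1, Finset.mem_univ _, ?_⟩
          rw [WithTop.sum_eq_top]
          refine ⟨c.2, Finset.mem_univ _, ?_⟩
          rw [hcB, WithTop.mul_top]
          exact_mod_cast hvpos.ne'
        rw [hValTop]
        exact WithTop.coe_lt_top τ


theorem bwd {σ : Type} [Fintype σ] (ar : σ → ℕ)
    {A B : Type} [Fintype A] [DecidableEq A] [Fintype B]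
    (vA : ∀ R : σ, (Fin (ar R) → A) → WithTop ℚ)
    (vB : ∀ R : σ, (Fin (ar R) → B) → WithTop ℚ)
    (μ : (A → B) → ℚ) (hμ : IsFracHom ar vA vB μ)
    (I : Type) [Fintype I] [DecidableEq I]
    (vI : ∀ R : σ, (Fin (ar R) → I) → ℚ) (hNN : NNeg ar vI)
    (τ : ℚ) (h1 : Opt ar vI vA ≤ (τ : WithTop ℚ)) (h2 : (τ : WithTop ℚ) < Opt ar vI vB) :
    False := by
  obtain ⟨hμ0, hμ1, hμc⟩ := hμ
  -- extract an optimal assignment h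
  have hne : (Finset.univ : Finset (I → A)).Nonempty := by
    by_contra hcon
    rw [Finset.not_nonempty_iff_eq_empty] at hcon
    rw [Opt, hcon] at h1
    rw [Finset.inf_empty] at h1
    exact WithTop.coe_ne_top (top_le_iff.mp h1)
  obtain ⟨h, -, hopt⟩ := Finset.exists_mem_eq_inf (Finset.univ : Finset (I → A)) hne
    (fun h => Val ar vI vA h)
  rw [Opt, hopt] at h1
  -- no term of Val(I,A,h) is ⊤
  have hVne : Val ar vI vA h ≠ ⊤ := fun hc => by
    rw [hc] at h1; exact WithTop.coe_ne_top (top_le_iff.mp h1)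
  have hterm : ∀ (R : σ) (v : Fin (ar R) → I),
      (vI R v : WithTop ℚ) * vA R (fun i => h (v i)) ≠ ⊤ := by
    intro R v hc
    apply hVne
    rw [Val, WithTop.sum_eq_top]
    exact ⟨R, Finset.mem_univ R, by rw [WithTop.sum_eq_top]; exact ⟨v, Finset.mem_univ v, hc⟩⟩
  have hAne : ∀ (R : σ) (v : Fin (ar R) → I), 0 < vI R v → vA R (fun i => h (v i)) ≠ ⊤ := by
    intro R v hv hc
    apply hterm R v
    rw [hc, WithTop.mul_top]
    exact_mod_cast (ne_of_gt hv)
  -- rational data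
  set aA : ∀ R : σ, (Fin (ar R) → I) → ℚ :=
    fun R v => if 0 < vI R v then (vA R (fun i => h (v i))).untopD 0 else 0 with haA
  set bB : (A → B) → ∀ R : σ, (Fin (ar R) → I) → ℚ :=
    fun f R v => if 0 < vI R v then (vB R (fun i => f (h (v i)))).untopD 0 else 0 with hbB
  have hvttop : ∀ (R : σ) (v : Fin (ar R) → I), 0 < vI R v →
      vA R (fun i => h (v i)) = ((aA R v : ℚ) : WithTop ℚ) := by
    intro R v hv
    have hd : aA R v = if 0 < vI R v then (vA R fun i => h (v i)).untopD 0 else 0 := rfl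
    rw [hd, if_pos hv]
    lift vA R (fun i => h (v i)) to ℚ using hAne R v hv with q hq
    simp
  -- the fractional homomorphism constraint, rationally
  have hBne : ∀ (R : σ) (v : Fin (ar R) → I), 0 < vI R v → ∀ f, 0 < μ f →
      vB R (fun i => f (h (v i))) ≠ ⊤ := by
    intro R v hv f hf hc
    have hcon := hμc R (fun i => h (v i))
    rw [hvttop R v hv] at hcon
    have htop : ∑ f' : A → B, (μ f' : WithTop ℚ) * vB R (fun i => f' (h (v i))) = ⊤ := by
      rw [WithTop.sum_eq_top]
      refine ⟨f, Finset.mem_univ f, ?_⟩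
      rw [hc, WithTop.mul_top]
      exact_mod_cast (ne_of_gt hf)
    rw [htop] at hcon
    exact WithTop.coe_ne_top (top_le_iff.mp hcon)
  have hconQ : ∀ (R : σ) (v : Fin (ar R) → I), 0 < vI R v →
      ∑ f : A → B, μ f * bB f R v ≤ aA R v := by
    intro R v hv
    have hcon := hμc R (fun i => h (v i))
    rw [hvttop R v hv] at hcon
    have he : ∀ f : A → B, (μ f : WithTop ℚ) * vB R (fun i => f (h (v i)))
        = ((μ f * bB f R v : ℚ) : WithTop ℚ) := by
      intro f
      have hd : bB f R v
          = if 0 < vI R v then (vB R fun i => f (h (v i))).untopD 0 else 0 := rfl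
      rcases eq_or_lt_of_le (hμ0 f) with hf0 | hfpos
      · rw [← hf0]; simp
      · rw [hd, if_pos hv]
        lift vB R (fun i => f (h (v i))) to ℚ using hBne R v hv f hfpos with q hq
        rw [← WithTop.coe_mul]
        simp
    rw [Finset.sum_congr rfl (fun f _ => he f), ← WithTop.coe_sum] at hcon
    exact_mod_cast hcon
  -- value of h on A, rationally
  set V : ℚ := ∑ R : σ, ∑ v : Fin (ar R) → I, vI R v * aA R v with hV
  have hValA : Val ar vI vA h = ((V : ℚ) : WithTop ℚ) := by
    rw [Val, hV]
    rw [WithTop.coe_sum]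
    refine Finset.sum_congr rfl fun R _ => ?_
    rw [WithTop.coe_sum]
    refine Finset.sum_congr rfl fun v _ => ?_
    rcases eq_or_lt_of_le (hNN R v) with hv0 | hvpos
    · rw [← hv0]; simp
    · rw [hvttop R v hvpos, ← WithTop.coe_mul]
  have hVτ : V ≤ τ := by rw [hValA] at h1; exact_mod_cast h1
  -- values of compositions, rationally
  set W : (A → B) → ℚ := fun f => ∑ R : σ, ∑ v : Fin (ar R) → I, vI R v * bB f R v with hW
  have hValB : ∀ f, 0 < μ f → Val ar vI vB (fun i => f (h i)) = ((W f : ℚ) : WithTop ℚ) := by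
    intro f hf
    rw [Val, hW, WithTop.coe_sum]
    refine Finset.sum_congr rfl fun R _ => ?_
    rw [WithTop.coe_sum]
    refine Finset.sum_congr rfl fun v _ => ?_
    have hd : bB f R v
        = if 0 < vI R v then (vB R fun i => f (h (v i))).untopD 0 else 0 := rfl
    rcases eq_or_lt_of_le (hNN R v) with hv0 | hvpos
    · rw [← hv0]; simp
    · rw [hd, if_pos hvpos]
      lift vB R (fun i => f (h (v i))) to ℚ using hBne R v hvpos f hf with q hq
      rw [← WithTop.coe_mul]
      simp
  -- average of W is at most V
  have havg : ∑ f : A → B, μ f * W f ≤ V := by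
    have hswap : ∑ f : A → B, μ f * W f
        = ∑ R : σ, ∑ v : Fin (ar R) → I, vI R v * ∑ f : A → B, μ f * bB f R v := by
      rw [hW]
      simp only [Finset.mul_sum]
      rw [Finset.sum_comm]
      refine Finset.sum_congr rfl fun R _ => ?_
      rw [Finset.sum_comm]
      exact Finset.sum_congr rfl fun v _ => Finset.sum_congr rfl fun f _ => by ring
    rw [hswap, hV]
    refine Finset.sum_le_sum fun R _ => Finset.sum_le_sum fun v _ => ?_
    rcases eq_or_lt_of_le (hNN R v) with hv0 | hvpos
    · rw [← hv0]; simp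
    · exact mul_le_mul_of_nonneg_left (hconQ R v hvpos) (le_of_lt hvpos)
  -- find a good f
  have hex : ∃ f, 0 < μ f ∧ W f ≤ V := by
    by_contra hcon
    push_neg at hcon
    have hex0 : ∃ f₀, 0 < μ f₀ := by
      by_contra hc0
      push_neg at hc0
      have : ∑ f : A → B, μ f = 0 :=
        Finset.sum_eq_zero fun f _ => le_antisymm (hc0 f) (hμ0 f)
      rw [hμ1] at this; exact one_ne_zero this
    obtain ⟨f₀, hf₀⟩ := hex0
    have hlt : ∑ f : A → B, μ f * V < ∑ f : A → B, μ f * W f := by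
      refine Finset.sum_lt_sum (fun f _ => ?_) ⟨f₀, Finset.mem_univ f₀, ?_⟩
      · rcases eq_or_lt_of_le (hμ0 f) with hf0 | hfpos
        · rw [← hf0]; simp
        · exact le_of_lt (mul_lt_mul_of_pos_left (hcon f hfpos) hfpos)
      · exact mul_lt_mul_of_pos_left (hcon f₀ hf₀) hf₀
    rw [← Finset.sum_mul, hμ1, one_mul] at hlt
    linarith [havg]
  obtain ⟨f₀, hf₀pos, hf₀le⟩ := hex
  have hOptB : Opt ar vI vB ≤ ((W f₀ : ℚ) : WithTop ℚ) := by
    rw [← hValB f₀ hf₀pos, Opt]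
    exact Finset.inf_le (Finset.mem_univ (fun i => f₀ (h i)))
  have : Opt ar vI vB ≤ ((τ : ℚ) : WithTop ℚ) :=
    le_trans hOptB (by exact_mod_cast le_trans hf₀le hVτ)
  exact absurd h2 (not_lt.mpr this)


theorem stmt_1 {σ : Type} [Fintype σ] (ar : σ → ℕ) (har : ∀ R, 0 < ar R)
    {A B : Type} [Fintype A] [DecidableEq A] [Fintype B]
    (vA : ∀ R : σ, (Fin (ar R) → A) → WithTop ℚ)
    (vB : ∀ R : σ, (Fin (ar R) → B) → WithTop ℚ) :
    (∀ (I : Type) [Fintype I] [DecidableEq I]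
        (vI : ∀ R : σ, (Fin (ar R) → I) → ℚ), NNeg ar vI →
        ∀ τ : ℚ, ¬ (Opt ar vI vA ≤ (τ : WithTop ℚ) ∧ (τ : WithTop ℚ) < Opt ar vI vB)) ↔
      ∃ μ : (A → B) → ℚ, IsFracHom ar vA vB μ := by
  constructor
  · intro hTemp
    exact fwd ar vA vB hTemp
  · rintro ⟨μ, hμ⟩ I _ _ vI hNN τ ⟨h1, h2⟩
    exact bwd ar vA vB μ hμ I vI hNN τ h1 h2

end PVCSP
end

section
/- Let σ be a finite signature, A and B valued σ-structures, and m ≥ 1 an integer. Then there exists a fractional homomorphism from LP^m(A) to B if and only if (A,B) has an m-ary symmetric fractional polymorphism. -/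
open scoped BigOperators Classical

namespace PVCSP

lemma wt_coe_mul_top {q : ℚ} (h : q ≠ 0) : (q : WithTop ℚ) * ⊤ = ⊤ :=
  WithTop.mul_top (by exact_mod_cast h)

lemma wt_add_mul {p q : ℚ} (hp : 0 ≤ p) (hq : 0 ≤ q) (x : WithTop ℚ) :
    ((p + q : ℚ) : WithTop ℚ) * x = (p : WithTop ℚ) * x + (q : WithTop ℚ) * x := by
  cases x with
  | top =>
    by_cases hp0 : p = 0
    · subst hp0
      by_cases hq0 : q = 0
      · subst hq0; simp
      · simp [wt_coe_mul_top hq0]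
    · have hpq : p + q ≠ 0 := ne_of_gt (add_pos_of_pos_of_nonneg (hp.lt_of_ne' hp0) hq)
      rw [wt_coe_mul_top hpq, wt_coe_mul_top hp0]
      simp
  | coe r =>
    rw [← WithTop.coe_mul, ← WithTop.coe_mul, ← WithTop.coe_mul, ← WithTop.coe_add]
    norm_num [add_mul]

lemma wt_mul_le_mul {q : ℚ} (hq : 0 ≤ q) {x y : WithTop ℚ} (h : x ≤ y) :
    (q : WithTop ℚ) * x ≤ (q : WithTop ℚ) * y := by
  rcases eq_or_ne y ⊤ with rfl | hy
  · by_cases hq0 : q = 0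
    · subst hq0; simp
    · rw [wt_coe_mul_top hq0]; exact le_top
  · lift y to ℚ using hy
    have hx : x ≠ ⊤ := ne_top_of_le_ne_top WithTop.coe_ne_top h
    lift x to ℚ using hx
    rw [← WithTop.coe_mul, ← WithTop.coe_mul, WithTop.coe_le_coe]
    exact mul_le_mul_of_nonneg_left (WithTop.coe_le_coe.mp h) hq

lemma wt_sum_mul {G : Type} (s : Finset G) (c : G → ℚ) (hc : ∀ g ∈ s, 0 ≤ c g) (x : WithTop ℚ) :
    ((∑ g ∈ s, c g : ℚ) : WithTop ℚ) * x = ∑ g ∈ s, (c g : WithTop ℚ) * x := by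
  induction s using Finset.induction_on with
  | empty => simp
  | insert _ _ hg ih =>
    rw [Finset.sum_insert hg, Finset.sum_insert hg,
      wt_add_mul (hc _ (Finset.mem_insert_self _ _))
        (Finset.sum_nonneg fun g hgs => hc _ (Finset.mem_insert_of_mem hgs)),
      ih (fun g hgs => hc _ (Finset.mem_insert_of_mem hgs))]

lemma wt_push {G F : Type} [Fintype G] [Fintype F] [DecidableEq F] (Φ : G → F)
    (μ : G → ℚ) (hμ : ∀ g, 0 ≤ μ g) (X : F → WithTop ℚ) :
    ∑ f : F, ((∑ g : G, if Φ g = f then μ g else 0 : ℚ) : WithTop ℚ) * X f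
      = ∑ g : G, (μ g : WithTop ℚ) * X (Φ g) := by
  have h1 : ∀ f : F, ((∑ g : G, if Φ g = f then μ g else 0 : ℚ) : WithTop ℚ) * X f
      = ∑ g : G, ((if Φ g = f then μ g else 0 : ℚ) : WithTop ℚ) * X f := fun f =>
    wt_sum_mul _ _ (fun g _ => by split <;> simp [hμ g]) _
  simp_rw [h1]
  rw [Finset.sum_comm]
  refine Finset.sum_congr rfl fun g _ => ?_
  have h2 : ∀ f : F, ((if Φ g = f then μ g else 0 : ℚ) : WithTop ℚ) * X f
      = if Φ g = f then (μ g : WithTop ℚ) * X f else 0 := fun f => by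
    split <;> simp
  simp_rw [h2]
  rw [Finset.sum_ite_eq]
  simp

lemma wt_push_one {G F : Type} [Fintype G] [Fintype F] [DecidableEq F] (Φ : G → F) (μ : G → ℚ) :
    ∑ f : F, (∑ g : G, if Φ g = f then μ g else 0) = ∑ g : G, μ g := by
  rw [Finset.sum_comm]
  refine Finset.sum_congr rfl fun g _ => ?_
  rw [Finset.sum_ite_eq]
  simp

lemma symm_eq {A B : Type} [Fintype A] {m : ℕ} {f : (Fin m → A) → B}
    (hf : IsSymmetricOp f) {x y : Fin m → A}
    (h : Multiset.map x Finset.univ.val = Multiset.map y Finset.univ.val) : f x = f y := by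
  letI : LinearOrder A := LinearOrder.lift' (fun a => Fintype.equivFin A a) (Equiv.injective _)
  rw [Fin.univ_val_map, Fin.univ_val_map] at h
  have hperm : (List.ofFn x).Perm (List.ofFn y) := Multiset.coe_eq_coe.mp h
  have hs : x ∘ Tuple.sort x = y ∘ Tuple.sort y :=
    List.ofFn_injective <| List.Perm.eq_of_sortedLE
      (Tuple.monotone_sort x).sortedLE_ofFn (Tuple.monotone_sort y).sortedLE_ofFn
      (((Tuple.sort x).ofFn_comp_perm x).trans (hperm.trans ((Tuple.sort y).ofFn_comp_perm y).symm))
  have hxy : (fun i => x (((Tuple.sort y).symm.trans (Tuple.sort x)) i)) = y := by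
    funext i
    have h2 := congrFun hs ((Tuple.sort y).symm i)
    simpa [Function.comp] using h2
  rw [← hxy, hf]

lemma exists_lift {A : Type} {m : ℕ} (s : Sym A m) :
    ∃ t : Fin m → A, Multiset.map t Finset.univ.val = Sym.toMultiset s := by
  obtain ⟨ms, hms⟩ := s
  have hl : ms.toList.length = m := by rw [Multiset.length_toList]; exact hms
  subst hl
  exact ⟨ms.toList.get, by rw [Fin.univ_val_map, List.ofFn_get]; exact Multiset.coe_toList ms⟩

lemma perm_multiset_map {A : Type} {m : ℕ} (x : Fin m → A) (ρ : Equiv.Perm (Fin m)) :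
    Multiset.map (fun i => x (ρ i)) Finset.univ.val = Multiset.map x Finset.univ.val := by
  rw [Fin.univ_val_map, Fin.univ_val_map]
  exact Multiset.coe_eq_coe.mpr (ρ.ofFn_comp_perm x)

def symFun {A B : Type} [Fintype A] {m : ℕ} (g : Sym A m → B) (x : Fin m → A) : B :=
  g ⟨Multiset.map x Finset.univ.val, by rw [Multiset.card_map]; exact Finset.card_fin m⟩

lemma symFun_symm {A B : Type} [Fintype A] {m : ℕ} (g : Sym A m → B) :
    IsSymmetricOp (symFun g) := fun ρ x =>
  congrArg g (Subtype.ext (perm_multiset_map x ρ))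

set_option maxHeartbeats 1000000 in
theorem stmt_4 {σ : Type} [Fintype σ] (ar : σ → ℕ) (har : ∀ R, 0 < ar R)
    {A B : Type} [Fintype A] [DecidableEq A] [Fintype B]
    (vA : ∀ R : σ, (Fin (ar R) → A) → WithTop ℚ)
    (vB : ∀ R : σ, (Fin (ar R) → B) → WithTop ℚ)
    (m : ℕ) (hm : 1 ≤ m) :
    (∃ μ : (Sym A m → B) → ℚ, IsFracHom ar (lpPow ar m vA) vB μ) ↔
      ∃ ω : ((Fin m → A) → B) → ℚ,
        IsFracPoly ar vA vB m ω ∧ ∀ f, 0 < ω f → IsSymmetricOp f := by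
  constructor
  · rintro ⟨μ, hμ0, hμ1, hμle⟩
    refine ⟨fun f => ∑ g : Sym A m → B, if symFun g = f then μ g else 0, ⟨?_, ?_, ?_⟩, ?_⟩
    · intro f
      refine Finset.sum_nonneg fun g _ => ?_
      split
      · exact hμ0 g
      · exact le_refl 0
    · show (∑ f : (Fin m → A) → B, ∑ g : Sym A m → B, if symFun g = f then μ g else 0) = 1
      rw [wt_push_one]; exact hμ1
    · intro R a
      have step1 := wt_push (symFun (A := A) (B := B) (m := m)) μ hμ0
        (fun f => vB R (fun j => f (fun i => a i j)))
      refine le_trans (le_of_eq step1) ?_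
      refine le_trans (hμle R (fun j =>
        ⟨Multiset.map (fun i => a i j) Finset.univ.val,
          by rw [Multiset.card_map]; exact Finset.card_fin m⟩)) ?_
      unfold lpPow
      refine wt_mul_le_mul (by positivity) ?_
      exact Finset.inf_le (Finset.mem_filter.mpr
        ⟨Finset.mem_univ (fun j i => a i j), fun j => rfl⟩)
    · intro f hf
      have hf' : (0:ℚ) < ∑ g : Sym A m → B, if symFun g = f then μ g else 0 := hf
      have hex : ∃ g, symFun g = f := by
        by_contra hc
        push_neg at hc
        rw [Finset.sum_eq_zero (fun g _ => if_neg (hc g))] at hf'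
        exact lt_irrefl 0 hf'
      obtain ⟨g, rfl⟩ := hex
      exact symFun_symm g
  · rintro ⟨ω, ⟨hω0, hω1, hωle⟩, hsym⟩
    choose L hL using fun s : Sym A m => exists_lift s
    refine ⟨fun g => ∑ f : (Fin m → A) → B, if (fun s => f (L s)) = g then ω f else 0,
      ?_, ?_, ?_⟩
    · intro g
      refine Finset.sum_nonneg fun f _ => ?_
      split
      · exact hω0 f
      · exact le_refl 0
    · show (∑ g : Sym A m → B, ∑ f : (Fin m → A) → B,
          if (fun s => f (L s)) = g then ω f else 0) = 1
      rw [wt_push_one]; exact hω1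
    · intro R s
      have hne : (Finset.univ.filter (fun t : Fin (ar R) → (Fin m → A) =>
          ∀ j, Multiset.map (t j) Finset.univ.val = Sym.toMultiset (s j))).Nonempty :=
        ⟨fun j => L (s j), Finset.mem_filter.mpr ⟨Finset.mem_univ _, fun j => hL (s j)⟩⟩
      obtain ⟨t₁, ht₁, hinf⟩ :=
        Finset.exists_mem_eq_inf _ hne (fun t => ∑ i : Fin m, vA R (fun j => t j i))
      have ht₁' := (Finset.mem_filter.mp ht₁).2
      have step1 := wt_push (fun (f : (Fin m → A) → B) (s : Sym A m) => f (L s)) ω hω0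
        (fun g => vB R (fun j => g (s j)))
      refine le_trans (le_of_eq step1) ?_
      have step2 : ∑ f : (Fin m → A) → B, (ω f : WithTop ℚ) * vB R (fun j => f (L (s j)))
          = ∑ f : (Fin m → A) → B, (ω f : WithTop ℚ) * vB R (fun j => f (fun i => t₁ j i)) := by
        refine Finset.sum_congr rfl fun f _ => ?_
        rcases eq_or_lt_of_le (hω0 f) with h0 | hpos
        · rw [← h0]; simp
        · have hfe : (fun j => f (L (s j))) = (fun j => f (fun i => t₁ j i)) :=
            funext fun j => symm_eq (hsym f hpos) ((hL (s j)).trans (ht₁' j).symm)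
          rw [hfe]
      refine le_trans (le_of_eq step2) ?_
      have step3 := hωle R (fun i j => t₁ j i)
      refine le_trans step3 ?_
      rw [lpPow, hinf]


end PVCSP
end
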